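/- arXiv:1807.01590 — 10 statements merged into one kernel-verified Lean document; each statement's English description precedes it below -/
import Mathlib

section
/- Let H : ℝⁿ × ℝ × ℝⁿ → ℝ be a jointly convex, twice continuously differentiable function, with arguments written (x, v, p). Let Ω ⊆ ℝⁿ be open and v : Ω → ℝ be three times continuously differentiable with H(x, v(x), ∇v(x)) = 0 for all x ∈ Ω. Let T > 0 and let x : [0,T] → Ω be a differentiable curve satisfying the characteristic equation x′(s) = ∇_p H(x(s), v(x(s)), ∇v(x(s))) for all s ∈ [0,T]. Fix ξ ∈ ℝⁿ and set q(s) := ⟨ξ, D²v(x(s)) ξ⟩. Then for every s ∈ [0,T], q(s) ≤ q(0) · exp(−∫₀ˢ ∂_v H(x(τ), v(x(τ)), ∇v(x(τ))) dτ). -/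
open Set Filter Topology

noncomputable section

abbrev Euc (n : ℕ) := EuclideanSpace ℝ (Fin n)

/-- The real inner ℝ product. -/
noncomputable def rinner {n : ℕ} (x y : Euc n) : ℝ := inner ℝ x y

private lemma nonneg_of_monotone_hasDerivAt {f : ℝ → ℝ} (hm : Monotone f) {a t₀ : ℝ}
    (hf : HasDerivAt f a t₀) : 0 ≤ a := by
  have h2 : Filter.Tendsto (slope f t₀) (𝓝[>] t₀) (𝓝 a) :=
    (hasDerivAt_iff_tendsto_slope.1 hf).mono_left
      (nhdsWithin_mono _ fun x hx => ne_of_gt hx)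
  refine ge_of_tendsto h2 ?_
  filter_upwards [self_mem_nhdsWithin] with t ht
  have h1 : t₀ < t := ht
  rw [slope_def_field]
  exact div_nonneg (by simpa using sub_nonneg.2 (hm h1.le)) (sub_nonneg.2 h1.le)

private lemma hessian_nonneg {F : Type*} [NormedAddCommGroup F] [NormedSpace ℝ F]
    {H : F → ℝ} (hH : ContDiff ℝ 2 H) (hc : ConvexOn ℝ Set.univ H) (z w : F) :
    0 ≤ fderiv ℝ (fderiv ℝ H) z w w := by
  have hd : Differentiable ℝ H := hH.differentiable (by norm_num)
  have hH1 : ContDiff ℝ 1 (fderiv ℝ H) := hH.fderiv_right (by norm_num)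
  have hL : ∀ t : ℝ, HasDerivAt (fun t : ℝ => z + t • w) w t := by
    intro t
    simpa using ((hasDerivAt_id t).smul_const w).const_add z
  have hφt : ∀ t : ℝ, HasDerivAt (fun t : ℝ => H (z + t • w)) (fderiv ℝ H (z + t • w) w) t :=
    fun t => (hd _).hasFDerivAt.comp_hasDerivAt t (hL t)
  have φconv : ConvexOn ℝ Set.univ (fun t : ℝ => H (z + t • w)) := by
    have h := hc.comp_affineMap (AffineMap.lineMap z (z + w))
    rw [Set.preimage_univ] at h
    have heq : (H ∘ ⇑(AffineMap.lineMap z (z + w))) = fun t : ℝ => H (z + t • w) := by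
      funext t
      show H ((AffineMap.lineMap z (z + w)) t) = H (z + t • w)
      rw [AffineMap.lineMap_apply]
      congr 1
      rw [vadd_eq_add, vsub_eq_sub, add_sub_cancel_left, add_comm]
    rwa [heq] at h
  have hmono : Monotone (deriv (fun t : ℝ => H (z + t • w))) := by
    rw [← monotoneOn_univ]
    exact φconv.monotoneOn_deriv (fun t _ => (hφt t).differentiableAt)
  have hderiv_eq : deriv (fun t : ℝ => H (z + t • w)) = fun t => fderiv ℝ H (z + t • w) w := by
    funext t; exact (hφt t).deriv
  rw [hderiv_eq] at hmono
  have hdiff2 : DifferentiableAt ℝ (fun u => fderiv ℝ H u w) z :=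
    ((hH1.differentiable (by norm_num)) z).clm_apply (differentiableAt_const w)
  have hψ : HasDerivAt (fun t : ℝ => fderiv ℝ H (z + t • w) w)
      (fderiv ℝ (fun u => fderiv ℝ H u w) z w) 0 := by
    have hfd : HasFDerivAt (fun u => fderiv ℝ H u w)
        (fderiv ℝ (fun u => fderiv ℝ H u w) z) (z + (0 : ℝ) • w) := by
      simpa using hdiff2.hasFDerivAt
    have h := hfd.comp_hasDerivAt 0 (hL 0)
    exact h
  have h0 : 0 ≤ fderiv ℝ (fun u => fderiv ℝ H u w) z w :=
    nonneg_of_monotone_hasDerivAt hmono hψ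
  have heq2 : fderiv ℝ (fun u => fderiv ℝ H u w) z w = fderiv ℝ (fderiv ℝ H) z w w := by
    rw [fderiv_clm_apply ((hH1.differentiable (by norm_num)) z) (differentiableAt_const w)]
    simp
  rwa [heq2] at h0

private theorem key {E : Type*} [NormedAddCommGroup E] [InnerProductSpace ℝ E] [CompleteSpace E]
    (H : E × ℝ × E → ℝ) (hH : ContDiff ℝ 2 H)
    (hHconv : ConvexOn ℝ univ H)
    (Ω : Set E) (hΩ : IsOpen Ω)
    (v : E → ℝ) (hv : ContDiffOn ℝ 3 v Ω)
    (hHJ : ∀ x ∈ Ω, H (x, v x, gradient v x) = 0)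
    (T : ℝ) (hT : 0 < T) (x : ℝ → E)
    (hxΩ : ∀ s ∈ Icc (0 : ℝ) T, x s ∈ Ω)
    (hchar : ∀ s ∈ Icc (0 : ℝ) T,
      HasDerivAt x (gradient (fun p => H (x s, v (x s), p)) (gradient v (x s))) s)
    (ξ : E) :
    ∀ s ∈ Icc (0 : ℝ) T,
      (inner ℝ ξ (fderiv ℝ (gradient v) (x s) ξ) : ℝ) ≤
        (inner ℝ ξ (fderiv ℝ (gradient v) (x 0) ξ) : ℝ) *
          Real.exp (-(∫ τ in (0 : ℝ)..s,
            deriv (fun t => H (x τ, t, gradient v (x τ))) (v (x τ)))) := by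
  -- ## Part 0 : basic differentiability facts
  have hHd : Differentiable ℝ H := hH.differentiable (by norm_num)
  have hH1 : ContDiff ℝ 1 (fderiv ℝ H) := hH.fderiv_right (by norm_num)
  have hH'd : ∀ z, HasFDerivAt (fderiv ℝ H) (fderiv ℝ (fderiv ℝ H) z) z :=
    fun z => ((hH1.differentiable (by norm_num)) z).hasFDerivAt
  have hvd : ∀ y ∈ Ω, HasFDerivAt v (fderiv ℝ v y) y := fun y hy =>
    ((hv.differentiableOn (by norm_num)).differentiableAt (hΩ.mem_nhds hy)).hasFDerivAt
  have hgrad_eq : ∀ y, fderiv ℝ v y = InnerProductSpace.toDual ℝ E (gradient v y) := by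
    intro y
    rw [show gradient v y = (InnerProductSpace.toDual ℝ E).symm (fderiv ℝ v y) from rfl]
    simp
  have hfderiv_inner : ∀ y (a : E), fderiv ℝ v y a = (inner ℝ (gradient v y) a : ℝ) := by
    intro y a; rw [hgrad_eq y]; exact InnerProductSpace.toDual_apply_apply
  have hG : ContDiffOn ℝ 2 (gradient v) Ω := by
    have h1 : ContDiffOn ℝ 2 (fderiv ℝ v) Ω := hv.fderiv_of_isOpen hΩ (by norm_num)
    have h2 : ContDiff ℝ 2
        ⇑((InnerProductSpace.toDual ℝ E).symm.toLinearIsometry.toContinuousLinearMap) :=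
      ContinuousLinearMap.contDiff _
    exact (h2.comp_contDiffOn h1).congr fun y _ => rfl
  have hA : ContDiffOn ℝ 1 (fderiv ℝ (gradient v)) Ω := hG.fderiv_of_isOpen hΩ (by norm_num)
  have hGd : ∀ y ∈ Ω, HasFDerivAt (gradient v) (fderiv ℝ (gradient v) y) y := fun y hy =>
    ((hG.differentiableOn (by norm_num)).differentiableAt (hΩ.mem_nhds hy)).hasFDerivAt
  have hAd : ∀ y ∈ Ω,
      HasFDerivAt (fderiv ℝ (gradient v)) (fderiv ℝ (fderiv ℝ (gradient v)) y) y := fun y hy =>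
    ((hA.differentiableOn (by norm_num)).differentiableAt (hΩ.mem_nhds hy)).hasFDerivAt
  -- ## Bridges between `deriv`/`gradient` forms and the full derivative of H
  have hc_eq : ∀ (a p : E) (b : ℝ),
      deriv (fun t => H (a, t, p)) b = fderiv ℝ H (a, b, p) (0, 1, 0) := by
    intro a p b
    have hρ : HasDerivAt (fun t : ℝ => ((a, t, p) : E × ℝ × E)) (0, 1, 0) b :=
      HasDerivAt.prodMk (hasDerivAt_const b a) (HasDerivAt.prodMk (hasDerivAt_id b) (hasDerivAt_const b p))
    exact ((hHd _).hasFDerivAt.comp_hasDerivAt b hρ).deriv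
  have hgradp : ∀ (a p₀ : E) (b : ℝ) (w : E),
      (inner ℝ (gradient (fun p => H (a, b, p)) p₀) w : ℝ) = fderiv ℝ H (a, b, p₀) (0, 0, w) := by
    intro a p₀ b w
    have hJ : HasFDerivAt (fun p : E => ((a, b, p) : E × ℝ × E))
        ((0 : E →L[ℝ] E).prod ((0 : E →L[ℝ] ℝ).prod (ContinuousLinearMap.id ℝ E))) p₀ :=
      HasFDerivAt.prodMk (hasFDerivAt_const a p₀) (HasFDerivAt.prodMk (hasFDerivAt_const b p₀) (hasFDerivAt_id p₀))
    have h : HasFDerivAt (fun p : E => H (a, b, p))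
        ((fderiv ℝ H (a, b, p₀)).comp
          ((0 : E →L[ℝ] E).prod ((0 : E →L[ℝ] ℝ).prod (ContinuousLinearMap.id ℝ E)))) p₀ :=
      (hHd _).hasFDerivAt.comp p₀ hJ
    have hgr : gradient (fun p => H (a, b, p)) p₀ = (InnerProductSpace.toDual ℝ E).symm
        ((fderiv ℝ H (a, b, p₀)).comp
          ((0 : E →L[ℝ] E).prod ((0 : E →L[ℝ] ℝ).prod (ContinuousLinearMap.id ℝ E)))) := by
      rw [show gradient (fun p => H (a, b, p)) p₀ =
        (InnerProductSpace.toDual ℝ E).symm (fderiv ℝ (fun p => H (a, b, p)) p₀) from rfl,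
        h.fderiv]
    rw [hgr]
    rw [← InnerProductSpace.toDual_apply_apply, LinearIsometryEquiv.apply_symm_apply]
    simp
  -- ## Symmetry of second and third derivatives of v
  have hS2 : ∀ y ∈ Ω, ∀ a b : E,
      fderiv ℝ (fderiv ℝ (gradient v)) y a b = fderiv ℝ (fderiv ℝ (gradient v)) y b a := by
    intro y hy
    have hGev : ∀ᶠ z in 𝓝 y, HasFDerivAt (gradient v) (fderiv ℝ (gradient v) z) z := by
      filter_upwards [hΩ.mem_nhds hy] with z hz using hGd z hz
    exact second_derivative_symmetric_of_eventually hGev (hAd y hy)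
  have hS1 : ∀ y ∈ Ω, ∀ a b : E,
      (inner ℝ (fderiv ℝ (gradient v) y a) b : ℝ) = inner ℝ (fderiv ℝ (gradient v) y b) a := by
    intro y hy a b
    set tdc : E →L[ℝ] (E →L[ℝ] ℝ) :=
      (InnerProductSpace.toDual ℝ E).toLinearIsometry.toContinuousLinearMap with htdc
    have hDvd : HasFDerivAt (fderiv ℝ v) (tdc.comp (fderiv ℝ (gradient v) y)) y := by
      have h := tdc.hasFDerivAt.comp y (hGd y hy)
      have hfun : (fderiv ℝ v) = fun z => tdc (gradient v z) := by
        funext z; rw [hgrad_eq z]; rfl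
      rw [hfun]; exact h
    have hvev : ∀ᶠ z in 𝓝 y, HasFDerivAt v (fderiv ℝ v z) z := by
      filter_upwards [hΩ.mem_nhds hy] with z hz using hvd z hz
    have h := second_derivative_symmetric_of_eventually hvev hDvd a b
    have h' : (InnerProductSpace.toDual ℝ E) (fderiv ℝ (gradient v) y a) b =
        (InnerProductSpace.toDual ℝ E) (fderiv ℝ (gradient v) y b) a := h
    simpa [InnerProductSpace.toDual_apply_apply] using h'
  have happly : ∀ y ∈ Ω, ∀ b : E, HasFDerivAt (fun z => fderiv ℝ (gradient v) z b)
      ((fderiv ℝ (fderiv ℝ (gradient v)) y).flip b) y := by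
    intro y hy b
    have h := (hAd y hy).clm_apply (hasFDerivAt_const b y)
    simpa using h
  have hS3 : ∀ y ∈ Ω, ∀ a b c : E,
      (inner ℝ a (fderiv ℝ (fderiv ℝ (gradient v)) y c b) : ℝ) =
        inner ℝ b (fderiv ℝ (fderiv ℝ (gradient v)) y c a) := by
    intro y hy a b c
    have h₁ : HasFDerivAt (fun z => (inner ℝ a (fderiv ℝ (gradient v) z b) : ℝ))
        ((innerSL ℝ a).comp ((fderiv ℝ (fderiv ℝ (gradient v)) y).flip b)) y :=
      (innerSL ℝ a).hasFDerivAt.comp y (happly y hy b)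
    have h₂ : HasFDerivAt (fun z => (inner ℝ b (fderiv ℝ (gradient v) z a) : ℝ))
        ((innerSL ℝ b).comp ((fderiv ℝ (fderiv ℝ (gradient v)) y).flip a)) y :=
      (innerSL ℝ b).hasFDerivAt.comp y (happly y hy a)
    have heq : (fun z => (inner ℝ a (fderiv ℝ (gradient v) z b) : ℝ)) =ᶠ[𝓝 y]
        (fun z => (inner ℝ b (fderiv ℝ (gradient v) z a) : ℝ)) := by
      filter_upwards [hΩ.mem_nhds hy] with z hz
      calc (inner ℝ a (fderiv ℝ (gradient v) z b) : ℝ)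
          = inner ℝ (fderiv ℝ (gradient v) z b) a := real_inner_comm _ _
        _ = inner ℝ (fderiv ℝ (gradient v) z a) b := hS1 z hz b a
        _ = inner ℝ b (fderiv ℝ (gradient v) z a) := real_inner_comm _ _
    have h₂' : HasFDerivAt (fun z => (inner ℝ b (fderiv ℝ (gradient v) z a) : ℝ))
        ((innerSL ℝ a).comp ((fderiv ℝ (fderiv ℝ (gradient v)) y).flip b)) y :=
      h₁.congr_of_eventuallyEq heq.symm
    have h4 := h₂'.unique h₂
    have h5 := congrArg (fun L : E →L[ℝ] ℝ => L c) h4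
    simpa using h5
  -- ## Part 2 : differentiating the HJ identity twice in the direction ξ
  have hgzero : ∀ y ∈ Ω, (fderiv ℝ H (y, v y, gradient v y)).comp
      ((ContinuousLinearMap.id ℝ E).prod ((fderiv ℝ v y).prod (fderiv ℝ (gradient v) y))) = 0 := by
    intro y hy
    have hΦ : HasFDerivAt (fun z => ((z, v z, gradient v z) : E × ℝ × E))
        ((ContinuousLinearMap.id ℝ E).prod ((fderiv ℝ v y).prod (fderiv ℝ (gradient v) y))) y :=
      HasFDerivAt.prodMk (hasFDerivAt_id y) ((hvd y hy).prodMk (hGd y hy))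
    have hgd : HasFDerivAt (fun z => H (z, v z, gradient v z))
        ((fderiv ℝ H (y, v y, gradient v y)).comp
          ((ContinuousLinearMap.id ℝ E).prod
            ((fderiv ℝ v y).prod (fderiv ℝ (gradient v) y)))) y :=
      (hHd _).hasFDerivAt.comp y hΦ
    have hg0 : HasFDerivAt (fun z => H (z, v z, gradient v z)) (0 : E →L[ℝ] ℝ) y := by
      have hev : (fun z => H (z, v z, gradient v z)) =ᶠ[𝓝 y] (fun _ => (0 : ℝ)) := by
        filter_upwards [hΩ.mem_nhds hy] with z hz using hHJ z hz
      exact (hasFDerivAt_const (0 : ℝ) y).congr_of_eventuallyEq hev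
    exact hgd.unique hg0
  have hk0 : ∀ y ∈ Ω, fderiv ℝ H (y, v y, gradient v y)
      (ξ, (inner ℝ (gradient v y) ξ : ℝ), fderiv ℝ (gradient v) y ξ) = 0 := by
    intro y hy
    have h := congrArg (fun L : E →L[ℝ] ℝ => L ξ) (hgzero y hy)
    simpa only [ContinuousLinearMap.comp_apply, ContinuousLinearMap.prod_apply,
      ContinuousLinearMap.coe_id', id_eq, ContinuousLinearMap.zero_apply, hfderiv_inner] using h
  have hkey : ∀ y ∈ Ω,
      fderiv ℝ H (y, v y, gradient v y) (0, 1, 0) * (inner ℝ ξ (fderiv ℝ (gradient v) y ξ) : ℝ)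
        + fderiv ℝ H (y, v y, gradient v y)
            ((0 : E), (0 : ℝ), fderiv ℝ (fderiv ℝ (gradient v)) y ξ ξ) ≤ 0 := by
    intro y hy
    have hΦ : HasFDerivAt (fun z => ((z, v z, gradient v z) : E × ℝ × E))
        ((ContinuousLinearMap.id ℝ E).prod ((fderiv ℝ v y).prod (fderiv ℝ (gradient v) y))) y :=
      HasFDerivAt.prodMk (hasFDerivAt_id y) ((hvd y hy).prodMk (hGd y hy))
    have hc : HasFDerivAt (fun z => fderiv ℝ H (z, v z, gradient v z))
        ((fderiv ℝ (fderiv ℝ H) (y, v y, gradient v y)).comp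
          ((ContinuousLinearMap.id ℝ E).prod
            ((fderiv ℝ v y).prod (fderiv ℝ (gradient v) y)))) y :=
      ((hH1.differentiable (by norm_num)) _).hasFDerivAt.comp y hΦ
    have hinner : HasFDerivAt (fun z => (inner ℝ (gradient v z) ξ : ℝ))
        (((innerSL ℝ).flip ξ).comp (fderiv ℝ (gradient v) y)) y :=
      ((innerSL ℝ).flip ξ).hasFDerivAt.comp y (hGd y hy)
    have hu : HasFDerivAt
        (fun z => ((ξ, (inner ℝ (gradient v z) ξ : ℝ), fderiv ℝ (gradient v) z ξ) : E × ℝ × E))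
        ((0 : E →L[ℝ] E).prod ((((innerSL ℝ).flip ξ).comp (fderiv ℝ (gradient v) y)).prod
          ((fderiv ℝ (fderiv ℝ (gradient v)) y).flip ξ))) y :=
      HasFDerivAt.prodMk (hasFDerivAt_const ξ y) (hinner.prodMk (happly y hy ξ))
    have hk := hc.clm_apply hu
    have hkz : HasFDerivAt (fun z => fderiv ℝ H (z, v z, gradient v z)
        (ξ, (inner ℝ (gradient v z) ξ : ℝ), fderiv ℝ (gradient v) z ξ)) (0 : E →L[ℝ] ℝ) y := by
      have hev : (fun z => fderiv ℝ H (z, v z, gradient v z)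
          (ξ, (inner ℝ (gradient v z) ξ : ℝ), fderiv ℝ (gradient v) z ξ)) =ᶠ[𝓝 y]
          (fun _ => (0 : ℝ)) := by
        filter_upwards [hΩ.mem_nhds hy] with z hz using hk0 z hz
      exact (hasFDerivAt_const (0 : ℝ) y).congr_of_eventuallyEq hev
    have hEq := hk.unique hkz
    have hEqξ := congrArg (fun L : E →L[ℝ] ℝ => L ξ) hEq
    simp only [ContinuousLinearMap.add_apply, ContinuousLinearMap.comp_apply,
      ContinuousLinearMap.flip_apply, ContinuousLinearMap.prod_apply,
      ContinuousLinearMap.coe_id', id_eq, ContinuousLinearMap.zero_apply,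
      innerSL_apply_apply, hfderiv_inner] at hEqξ
    have hconv : 0 ≤ fderiv ℝ (fderiv ℝ H) (y, v y, gradient v y)
        (ξ, (inner ℝ (gradient v y) ξ : ℝ), fderiv ℝ (gradient v) y ξ)
        (ξ, (inner ℝ (gradient v y) ξ : ℝ), fderiv ℝ (gradient v) y ξ) :=
      hessian_nonneg hH hHconv _ _
    have hsplit : fderiv ℝ H (y, v y, gradient v y)
        ((0 : E), (inner ℝ (fderiv ℝ (gradient v) y ξ) ξ : ℝ),
          fderiv ℝ (fderiv ℝ (gradient v)) y ξ ξ)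
        = (inner ℝ (fderiv ℝ (gradient v) y ξ) ξ : ℝ)
            * fderiv ℝ H (y, v y, gradient v y) ((0 : E), (1 : ℝ), (0 : E))
          + fderiv ℝ H (y, v y, gradient v y)
            ((0 : E), (0 : ℝ), fderiv ℝ (fderiv ℝ (gradient v)) y ξ ξ) := by
      have hdec : (((0 : E), (inner ℝ (fderiv ℝ (gradient v) y ξ) ξ : ℝ),
          fderiv ℝ (fderiv ℝ (gradient v)) y ξ ξ) : E × ℝ × E)
          = (inner ℝ (fderiv ℝ (gradient v) y ξ) ξ : ℝ) • ((0 : E), (1 : ℝ), (0 : E))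
            + ((0 : E), (0 : ℝ), fderiv ℝ (fderiv ℝ (gradient v)) y ξ ξ) := by
        simp [Prod.ext_iff]
      rw [hdec, map_add, map_smul]
      simp
    have hcomm : (inner ℝ ξ (fderiv ℝ (gradient v) y ξ) : ℝ)
        = (inner ℝ (fderiv ℝ (gradient v) y ξ) ξ : ℝ) := real_inner_comm _ _
    rw [hcomm]
    linarith [hEqξ, hconv, hsplit]
  -- ## Part 3 : derivative of q along the characteristic and the Gronwall-type bound
  have hq : ∀ s ∈ Icc (0:ℝ) T,
      HasDerivAt (fun τ => (inner ℝ ξ (fderiv ℝ (gradient v) (x τ) ξ) : ℝ))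
      ((inner ℝ ξ (fderiv ℝ (fderiv ℝ (gradient v)) (x s)
        (gradient (fun p => H (x s, v (x s), p)) (gradient v (x s))) ξ) : ℝ)) s := by
    intro s hs
    have hy := hxΩ s hs
    have hm : HasFDerivAt (fun y => (inner ℝ ξ (fderiv ℝ (gradient v) y ξ) : ℝ))
        ((innerSL ℝ ξ).comp ((fderiv ℝ (fderiv ℝ (gradient v)) (x s)).flip ξ)) (x s) :=
      (innerSL ℝ ξ).hasFDerivAt.comp (x s) (happly (x s) hy ξ)
    have h := hm.comp_hasDerivAt s (hchar s hs)
    simpa [ContinuousLinearMap.comp_apply, ContinuousLinearMap.flip_apply, innerSL_apply_apply, Function.comp_def]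
      using h
  have hqle : ∀ s ∈ Icc (0:ℝ) T,
      (inner ℝ ξ (fderiv ℝ (fderiv ℝ (gradient v)) (x s)
        (gradient (fun p => H (x s, v (x s), p)) (gradient v (x s))) ξ) : ℝ)
      + deriv (fun t => H (x s, t, gradient v (x s))) (v (x s))
        * (inner ℝ ξ (fderiv ℝ (gradient v) (x s) ξ) : ℝ) ≤ 0 := by
    intro s hs
    have hy := hxΩ s hs
    have h1 : (inner ℝ ξ (fderiv ℝ (fderiv ℝ (gradient v)) (x s)
        (gradient (fun p => H (x s, v (x s), p)) (gradient v (x s))) ξ) : ℝ)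
        = inner ℝ (gradient (fun p => H (x s, v (x s), p)) (gradient v (x s)))
            (fderiv ℝ (fderiv ℝ (gradient v)) (x s) ξ ξ) := by
      rw [hS2 (x s) hy _ ξ]
      exact hS3 (x s) hy ξ _ ξ
    have h2 : (inner ℝ (gradient (fun p => H (x s, v (x s), p)) (gradient v (x s)))
            (fderiv ℝ (fderiv ℝ (gradient v)) (x s) ξ ξ) : ℝ)
        = fderiv ℝ H (x s, v (x s), gradient v (x s))
            ((0 : E), (0 : ℝ), fderiv ℝ (fderiv ℝ (gradient v)) (x s) ξ ξ) :=
      hgradp (x s) (gradient v (x s)) (v (x s)) _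
    rw [h1, h2, hc_eq]
    linarith [hkey (x s) hy]
  -- ## Part 4 : continuity of the coefficient
  have hxc : ContinuousOn x (Icc 0 T) := fun s hs => ((hchar s hs).continuousAt).continuousWithinAt
  have hΦc : ContinuousOn (fun τ => ((x τ, v (x τ), gradient v (x τ)) : E × ℝ × E)) (Icc 0 T) :=
    hxc.prodMk (((hv.continuousOn).comp hxc hxΩ).prodMk ((hG.continuousOn).comp hxc hxΩ))
  have hcfun : ContinuousOn
      (fun τ => deriv (fun t => H (x τ, t, gradient v (x τ))) (v (x τ))) (Icc 0 T) := by
    have hH'c : Continuous (fderiv ℝ H) := hH1.continuous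
    have h1 : ContinuousOn (fun τ => fderiv ℝ H (x τ, v (x τ), gradient v (x τ))
        ((0 : E), (1 : ℝ), (0 : E))) (Icc 0 T) :=
      (ContinuousLinearMap.apply ℝ ℝ (((0 : E), (1 : ℝ), (0 : E)) :
        E × ℝ × E)).continuous.comp_continuousOn (hH'c.comp_continuousOn hΦc)
    exact h1.congr fun τ _ => hc_eq _ _ _
  -- ## Part 5 : Gronwall argument
  intro s hs
  set c : ℝ → ℝ := fun τ => deriv (fun t => H (x τ, t, gradient v (x τ))) (v (x τ)) with hc_def
  set q : ℝ → ℝ := fun τ => (inner ℝ ξ (fderiv ℝ (gradient v) (x τ) ξ) : ℝ) with hq_def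
  set D : ℝ → ℝ := fun σ => (inner ℝ ξ (fderiv ℝ (fderiv ℝ (gradient v)) (x σ)
      (gradient (fun p => H (x σ, v (x σ), p)) (gradient v (x σ))) ξ) : ℝ) with hD_def
  set I : ℝ → ℝ := fun σ => ∫ τ in (0:ℝ)..σ, c τ with hI_def
  show q s ≤ q 0 * Real.exp (-(I s))
  have hIcont : ContinuousOn I (Icc 0 T) := by
    have hint : MeasureTheory.IntegrableOn c (uIcc (0:ℝ) T) := by
      rw [uIcc_of_le hT.le]
      exact hcfun.integrableOn_Icc
    have h := intervalIntegral.continuousOn_primitive_interval hint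
    rwa [uIcc_of_le hT.le] at h
  have hqcont : ContinuousOn q (Icc 0 T) := fun σ hσ =>
    ((hq σ hσ).continuousAt).continuousWithinAt
  have hrcont : ContinuousOn (fun σ => q σ * Real.exp (I σ)) (Icc 0 T) :=
    hqcont.mul (Real.continuous_exp.comp_continuousOn hIcont)
  have hrd : ∀ σ ∈ Ico (0:ℝ) T, HasDerivWithinAt (fun σ => q σ * Real.exp (I σ))
      (D σ * Real.exp (I σ) + q σ * (Real.exp (I σ) * c σ)) (Ici σ) σ := by
    intro σ hσ
    have hσ' : σ ∈ Icc (0:ℝ) T := Ico_subset_Icc_self hσ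
    have hqd : HasDerivWithinAt q (D σ) (Ici σ) σ := (hq σ hσ').hasDerivWithinAt
    have hint : IntervalIntegrable c MeasureTheory.volume 0 σ := by
      apply ContinuousOn.intervalIntegrable
      rw [uIcc_of_le hσ.1]
      exact hcfun.mono (Icc_subset_Icc_right hσ'.2)
    have hmeas : StronglyMeasurableAtFilter c (𝓝[Ioi σ] σ) MeasureTheory.volume := by
      refine ⟨Icc σ T, ?_, (hcfun.mono (Icc_subset_Icc hσ.1 le_rfl)).aestronglyMeasurable
        measurableSet_Icc⟩
      have h : Ioi σ ∩ Iic T ∈ 𝓝[Ioi σ] σ :=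
        inter_mem self_mem_nhdsWithin (mem_nhdsWithin_of_mem_nhds (Iic_mem_nhds hσ.2))
      exact mem_of_superset h (fun t ht => ⟨le_of_lt ht.1, ht.2⟩)
    have hb : ContinuousWithinAt c (Ioi σ) σ := by
      have h0 : ContinuousWithinAt c (Icc 0 T) σ := hcfun σ hσ'
      have hmem : Icc (0:ℝ) T ∈ 𝓝[Ioi σ] σ := by
        have h : Ioi σ ∩ Iio T ∈ 𝓝[Ioi σ] σ :=
          inter_mem self_mem_nhdsWithin (mem_nhdsWithin_of_mem_nhds (Iio_mem_nhds hσ.2))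
        exact mem_of_superset h (fun t ht => ⟨le_trans hσ.1 (le_of_lt ht.1), le_of_lt ht.2⟩)
      exact h0.mono_of_mem_nhdsWithin hmem
    have hI' : HasDerivWithinAt I (c σ) (Ici σ) σ :=
      intervalIntegral.integral_hasDerivWithinAt_right hint hmeas hb
    have hexp : HasDerivWithinAt (fun σ => Real.exp (I σ)) (Real.exp (I σ) * c σ) (Ici σ) σ :=
      (Real.hasDerivAt_exp (I σ)).comp_hasDerivWithinAt σ hI'
    exact hqd.mul hexp
  have hbound : ∀ σ ∈ Ico (0:ℝ) T,
      D σ * Real.exp (I σ) + q σ * (Real.exp (I σ) * c σ) ≤ (0:ℝ) := by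
    intro σ hσ
    have h := hqle σ (Ico_subset_Icc_self hσ)
    calc D σ * Real.exp (I σ) + q σ * (Real.exp (I σ) * c σ)
        = (D σ + c σ * q σ) * Real.exp (I σ) := by ring
      _ ≤ 0 := mul_nonpos_iff.2 (Or.inr ⟨h, (Real.exp_pos _).le⟩)
  have hfence : ∀ ⦃σ⦄, σ ∈ Icc (0:ℝ) T → q σ * Real.exp (I σ) ≤ q 0 * Real.exp (I 0) :=
    image_le_of_deriv_right_le_deriv_boundary hrcont hrd le_rfl continuousOn_const
      (fun σ _ => hasDerivWithinAt_const σ (Ici σ) (q 0 * Real.exp (I 0))) hbound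
  have hrs := hfence hs
  have hI0 : I 0 = 0 := intervalIntegral.integral_same
  rw [hI0, Real.exp_zero, mul_one] at hrs
  rw [Real.exp_neg, ← div_eq_mul_inv, le_div_iff₀ (Real.exp_pos _)]
  exact hrs

/-- monotonicity (with an explicit exponential rate) of the second
derivative `q(s) = ⟨ξ, D²v(x(s)) ξ⟩` of a `C³` solution `v` of the Hamilton-Jacobi
equation `H(x, v, ∇v) = 0` with jointly convex `C²` Hamiltonian, along a
characteristic curve `x(s)`. -/
theorem hamilton_jacobi_second_derivative_gronwall {n : ℕ}
    (H : Euc n × ℝ × Euc n → ℝ) (hH : ContDiff ℝ 2 H)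
    (hHconv : ConvexOn ℝ univ H)
    (Ω : Set (Euc n)) (hΩ : IsOpen Ω)
    (v : Euc n → ℝ) (hv : ContDiffOn ℝ 3 v Ω)
    (hHJ : ∀ x ∈ Ω, H (x, v x, gradient v x) = 0)
    (T : ℝ) (hT : 0 < T) (x : ℝ → Euc n)
    (hxΩ : ∀ s ∈ Icc (0 : ℝ) T, x s ∈ Ω)
    (hchar : ∀ s ∈ Icc (0 : ℝ) T,
      HasDerivAt x (gradient (fun p => H (x s, v (x s), p)) (gradient v (x s))) s)
    (ξ : Euc n) :
    ∀ s ∈ Icc (0 : ℝ) T,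
      rinner ξ (fderiv ℝ (gradient v) (x s) ξ) ≤
        rinner ξ (fderiv ℝ (gradient v) (x 0) ξ) *
          Real.exp (-(∫ τ in (0 : ℝ)..s,
            deriv (fun t => H (x τ, t, gradient v (x τ))) (v (x τ)))) := by
  have h := key H hH hHconv Ω hΩ v hv hHJ T hT x hxΩ hchar ξ
  simpa [rinner] using h
end
end

section
/- Let K ⊆ ℝⁿ be a compact convex set with 0 in its interior whose gauge γ is strictly convex, let γ° be the gauge of the polar K°, let U ⊆ ℝⁿ be a bounded open set with nonempty boundary, and let φ : ℝⁿ → ℝ be continuous and satisfy the strict Lipschitz property. Let u : closure(U) → ℝ be continuous, differentiable at every point of U with γ°(∇u(z)) ≤ 1 for all z ∈ U, satisfying u ≤ ρ on closure(U) and u = φ on ∂U. If x ∈ U satisfies u(x) = ρ(x), then x has a unique ρ-closest point on ∂U; that is, there do not exist two distinct points y, z ∈ ∂U with ρ(x) = γ(x − y) + φ(y) = γ(x − z) + φ(z). -/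
open Set Filter Topology MeasureTheory
open scoped NNReal

noncomputable section

/-- The polar set `K° = {x | ⟨x, y⟩ ≤ 1 for all y ∈ K}`. -/
def polarSet {n : ℕ} (K : Set (Euc n)) : Set (Euc n) :=
  {x | ∀ y ∈ K, rinner x y ≤ 1}

/-- `rho K U φ x = min_{y ∈ ∂U} (γ_K(x - y) + φ y)`. -/
noncomputable def rho {n : ℕ} (K U : Set (Euc n)) (φ : Euc n → ℝ) (x : Euc n) : ℝ :=
  sInf ((fun y => gauge K (x - y) + φ y) '' frontier U)

/-- `rhoBar K U φ x = min_{y ∈ ∂U} (γ_K(y - x) - φ y)`. -/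
noncomputable def rhoBar {n : ℕ} (K U : Set (Euc n)) (φ : Euc n → ℝ) (x : Euc n) : ℝ :=
  sInf ((fun y => gauge K (y - x) - φ y) '' frontier U)

/-- `φ` satisfies the strict Lipschitz property with respect to the gauge of `K`. -/
def StrictLipschitzWrt {n : ℕ} (K : Set (Euc n)) (φ : Euc n → ℝ) : Prop :=
  ∀ x y : Euc n, x ≠ y → -gauge K (y - x) < φ x - φ y ∧ φ x - φ y < gauge K (x - y)

/-- The gauge of `K` is strictly convex: `γ(x+y) < γ(x) + γ(y)` unless
`x = c • y` or `y = c • x` for some `c ≥ 0`. -/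
def StrictlyConvexGauge {n : ℕ} (K : Set (Euc n)) : Prop :=
  ∀ x y : Euc n, (¬ ∃ c : ℝ, 0 ≤ c ∧ (x = c • y ∨ y = c • x)) →
    gauge K (x + y) < gauge K x + gauge K y

/-! ### Auxiliary lemmas -/

lemma polar_closed {n : ℕ} (K : Set (Euc n)) : IsClosed (polarSet K) := by
  have h : polarSet K = ⋂ y ∈ K, {x : Euc n | rinner x y ≤ 1} := by
    ext x; simp [polarSet]
  rw [h]
  exact isClosed_biInter fun y _ =>
    isClosed_le (Continuous.inner continuous_id continuous_const) continuous_const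

lemma polar_convex {n : ℕ} (K : Set (Euc n)) : Convex ℝ (polarSet K) := by
  intro a ha b hb s t hs ht hst y hy
  have h1 := ha y hy
  have h2 := hb y hy
  simp only [rinner, inner_add_left, real_inner_smul_left] at *
  nlinarith

lemma polar_mem_nhds {n : ℕ} (K : Set (Euc n)) (hKb : Bornology.IsBounded K) :
    polarSet K ∈ 𝓝 (0 : Euc n) := by
  obtain ⟨C, hC⟩ := (isBounded_iff_forall_norm_le).mp hKb
  set R : ℝ := max C 1 with hR
  have hR0 : 0 < R := lt_of_lt_of_le one_pos (le_max_right _ _)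
  have hsub : Metric.closedBall (0 : Euc n) R⁻¹ ⊆ polarSet K := by
    intro q hq y hy
    have hq' : ‖q‖ ≤ R⁻¹ := by simpa using hq
    have hy' : ‖y‖ ≤ R := le_trans (hC y hy) (le_max_left _ _)
    have := real_inner_le_norm q y
    have hmul : ‖q‖ * ‖y‖ ≤ R⁻¹ * R :=
      mul_le_mul hq' hy' (norm_nonneg _) (inv_nonneg.mpr hR0.le)
    rw [inv_mul_cancel₀ hR0.ne'] at hmul
    simpa [rinner] using le_trans this hmul
  exact Filter.mem_of_superset (Metric.closedBall_mem_nhds 0 (by positivity)) hsub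

lemma inner_le_gauge {n : ℕ} {K : Set (Euc n)} (hKcpt : IsCompact K) (hKconv : Convex ℝ K)
    (hK0 : (0 : Euc n) ∈ interior K) {p : Euc n} (hp : gauge (polarSet K) p ≤ 1) (v : Euc n) :
    (inner ℝ p v : ℝ) ≤ gauge K v := by
  have hKnhds : K ∈ 𝓝 (0 : Euc n) := mem_interior_iff_mem_nhds.mp hK0
  have hpK : p ∈ polarSet K := by
    have h := (gauge_le_one_iff_mem_closure (polar_convex K)
      (polar_mem_nhds K hKcpt.isBounded)).mp hp
    rwa [(polar_closed K).closure_eq] at h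
  rcases eq_or_ne v 0 with rfl | hv
  · simp [gauge_zero]
  · have habs : Absorbent ℝ K := absorbent_nhds_zero hKnhds
    have hg : 0 < gauge K v :=
      (gauge_pos habs (NormedSpace.isVonNBounded_of_isBounded _ hKcpt.isBounded)).mpr hv
    have hw : (gauge K v)⁻¹ • v ∈ K := by
      have h1 : gauge K ((gauge K v)⁻¹ • v) ≤ 1 := by
        rw [gauge_smul_of_nonneg (inv_nonneg.mpr hg.le), smul_eq_mul,
          inv_mul_cancel₀ hg.ne']
      have h2 := (gauge_le_one_iff_mem_closure hKconv hKnhds).mp h1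
      rwa [hKcpt.isClosed.closure_eq] at h2
    have h1 : rinner p ((gauge K v)⁻¹ • v) ≤ 1 := hpK _ hw
    have h2 : (inner ℝ p v : ℝ) = gauge K v * rinner p ((gauge K v)⁻¹ • v) := by
      rw [rinner, real_inner_smul_right]
      field_simp
    rw [h2]
    calc gauge K v * rinner p ((gauge K v)⁻¹ • v) ≤ gauge K v * 1 := by nlinarith
      _ = gauge K v := mul_one _

lemma frontier_cpt {n : ℕ} (U : Set (Euc n)) (hUbdd : Bornology.IsBounded U) :
    IsCompact (frontier U) :=
  (Metric.isCompact_of_isClosed_isBounded isClosed_closure hUbdd.closure).of_isClosed_subset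
    isClosed_frontier frontier_subset_closure

lemma gauge_phi_cont {n : ℕ} {K : Set (Euc n)} (hKconv : Convex ℝ K)
    (hK0 : (0 : Euc n) ∈ interior K) {φ : Euc n → ℝ} (hφcont : Continuous φ) (x : Euc n) :
    Continuous fun y => gauge K (x - y) + φ y :=
  ((continuous_gauge hKconv (mem_interior_iff_mem_nhds.mp hK0)).comp
    (continuous_const.sub continuous_id)).add hφcont

lemma rho_le {n : ℕ} {K U : Set (Euc n)} (hKconv : Convex ℝ K)
    (hK0 : (0 : Euc n) ∈ interior K) (hUbdd : Bornology.IsBounded U)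
    {φ : Euc n → ℝ} (hφcont : Continuous φ) {y : Euc n} (hy : y ∈ frontier U) (x : Euc n) :
    rho K U φ x ≤ gauge K (x - y) + φ y := by
  apply csInf_le
  · exact ((frontier_cpt U hUbdd).image (gauge_phi_cont hKconv hK0 hφcont x)).bddBelow
  · exact mem_image_of_mem _ hy

lemma rho_exists_min {n : ℕ} {K U : Set (Euc n)} (hKconv : Convex ℝ K)
    (hK0 : (0 : Euc n) ∈ interior K) (hUbdd : Bornology.IsBounded U)
    (hUfr : (frontier U).Nonempty)
    {φ : Euc n → ℝ} (hφcont : Continuous φ) (x : Euc n) :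
    ∃ y ∈ frontier U, rho K U φ x = gauge K (x - y) + φ y := by
  obtain ⟨y, hy, hmin⟩ := (frontier_cpt U hUbdd).exists_isMinOn hUfr
    (gauge_phi_cont hKconv hK0 hφcont x).continuousOn
  refine ⟨y, hy, le_antisymm (rho_le hKconv hK0 hUbdd hφcont hy x) ?_⟩
  apply le_csInf (hUfr.image _)
  rintro b ⟨w, hw, rfl⟩
  exact hmin hw

lemma rho_lip {n : ℕ} {K U : Set (Euc n)} (hKconv : Convex ℝ K)
    (hK0 : (0 : Euc n) ∈ interior K) (hUbdd : Bornology.IsBounded U)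
    (hUfr : (frontier U).Nonempty)
    {φ : Euc n → ℝ} (hφcont : Continuous φ) (x w : Euc n) :
    rho K U φ x ≤ gauge K (x - w) + rho K U φ w := by
  obtain ⟨y, hy, hmin⟩ := rho_exists_min hKconv hK0 hUbdd hUfr hφcont w
  have habs : Absorbent ℝ K := absorbent_nhds_zero (mem_interior_iff_mem_nhds.mp hK0)
  have htri := gauge_add_le hKconv habs (x - w) (w - y)
  rw [sub_add_sub_cancel] at htri
  have h1 := rho_le hKconv hK0 hUbdd hφcont hy x
  rw [hmin]
  linarith

/-- Lipschitz bound for `u` along a segment contained in `U`. -/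
lemma u_lip {n : ℕ} {K : Set (Euc n)} (hKcpt : IsCompact K) (hKconv : Convex ℝ K)
    (hK0 : (0 : Euc n) ∈ interior K) {U : Set (Euc n)}
    {u : Euc n → ℝ} (hudiff : ∀ z ∈ U, DifferentiableAt ℝ u z)
    (hugauge : ∀ z ∈ U, gauge (polarSet K) (gradient u z) ≤ 1)
    (a b : Euc n) (hseg : ∀ t ∈ Icc (0:ℝ) 1, a + t • (b - a) ∈ U) :
    u a ≤ u b + gauge K (a - b) := by
  set r : ℝ := gauge K (a - b) with hr
  set c : ℝ → Euc n := fun t => a + t • (b - a) with hc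
  have hcd : ∀ t : ℝ, HasDerivAt c (b - a) t := fun t => by
    simpa [hc] using ((hasDerivAt_id t).smul_const (b - a)).const_add a
  have key : ∀ t ∈ Icc (0:ℝ) 1,
      HasDerivAt (fun s => u (c s) + s * r)
        ((inner ℝ (gradient u (c t)) (b - a) : ℝ) + r) t := by
    intro t ht
    have hU := hseg t ht
    have hgrad : HasFDerivAt u ((InnerProductSpace.toDual ℝ (Euc n)) (gradient u (c t))) (c t) :=
      hasGradientAt_iff_hasFDerivAt.mp (hudiff _ hU).hasGradientAt
    have h1 : HasDerivAt (fun s => u (c s)) (inner ℝ (gradient u (c t)) (b - a) : ℝ) t := by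
      have := hgrad.comp_hasDerivAt t (hcd t)
      simp only [InnerProductSpace.toDual_apply_apply] at this
      exact this
    exact h1.add (hasDerivAt_mul_const r)
  have hderiv_nonneg : ∀ t ∈ Icc (0:ℝ) 1,
      0 ≤ (inner ℝ (gradient u (c t)) (b - a) : ℝ) + r := by
    intro t ht
    have hU := hseg t ht
    have h1 : (inner ℝ (gradient u (c t)) (a - b) : ℝ) ≤ gauge K (a - b) :=
      inner_le_gauge hKcpt hKconv hK0 (hugauge _ hU) (a - b)
    have h2 : (inner ℝ (gradient u (c t)) (b - a) : ℝ)
        = -(inner ℝ (gradient u (c t)) (a - b) : ℝ) := by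
      rw [← inner_neg_right, neg_sub]
    rw [h2]
    rw [← hr] at h1
    linarith
  have hmono : MonotoneOn (fun s => u (c s) + s * r) (Icc 0 1) := by
    apply monotoneOn_of_deriv_nonneg (convex_Icc 0 1)
    · intro t ht
      exact (key t ht).continuousAt.continuousWithinAt
    · intro t ht
      rw [interior_Icc] at ht
      exact ((key t (Ioo_subset_Icc_self ht)).differentiableAt).differentiableWithinAt
    · intro t ht
      rw [interior_Icc] at ht
      rw [(key t (Ioo_subset_Icc_self ht)).deriv]
      exact hderiv_nonneg t (Ioo_subset_Icc_self ht)
  have h01 := hmono (left_mem_Icc.mpr zero_le_one) (right_mem_Icc.mpr zero_le_one) zero_le_one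
  simp only [hc, zero_smul, add_zero, one_smul, zero_mul, one_mul] at h01
  simpa using h01

/-- No interior point of the segment from `x` to a `ρ`-closest point lies on the frontier. -/
lemma seg_mem_U {n : ℕ} {K : Set (Euc n)} (hKconv : Convex ℝ K)
    (hK0 : (0 : Euc n) ∈ interior K)
    {U : Set (Euc n)} (hUopen : IsOpen U) (hUbdd : Bornology.IsBounded U)
    {φ : Euc n → ℝ} (hφcont : Continuous φ) (hφlip : StrictLipschitzWrt K φ)
    {x : Euc n} (hx : x ∈ U) {y : Euc n} (hy : y ∈ frontier U)
    (hmin : rho K U φ x = gauge K (x - y) + φ y) :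
    ∀ t ∈ Ico (0:ℝ) 1, x + t • (y - x) ∈ U := by
  have hyU : y ∉ U := by
    intro h
    exact hy.2 (by rwa [hUopen.interior_eq])
  have hxy : x ≠ y := fun h => hyU (h ▸ hx)
  have nofr : ∀ t ∈ Ioo (0:ℝ) 1, x + t • (y - x) ∉ frontier U := by
    intro t ht hfr
    set w : Euc n := x + t • (y - x) with hw
    have hxw : x - w = t • (x - y) := by
      rw [hw]; module
    have hwy : w - y = (1 - t) • (x - y) := by
      rw [hw]; module
    have hwyne : w ≠ y := by
      rw [← sub_ne_zero, hwy]
      exact smul_ne_zero (by linarith [ht.2]) (sub_ne_zero.mpr hxy)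
    have hlip := (hφlip w y hwyne).2
    have h1 : rho K U φ x ≤ gauge K (x - w) + φ w :=
      rho_le hKconv hK0 hUbdd hφcont hfr x
    have h2 : gauge K (x - w) = t * gauge K (x - y) := by
      rw [hxw, gauge_smul_of_nonneg ht.1.le, smul_eq_mul]
    have h3 : gauge K (w - y) = (1 - t) * gauge K (x - y) := by
      rw [hwy, gauge_smul_of_nonneg (by linarith [ht.2] : (0:ℝ) ≤ 1 - t), smul_eq_mul]
    rw [hmin] at h1
    linarith
  intro t ht
  have hconn : IsPreconnected ((fun s : ℝ => x + s • (y - x)) '' Icc 0 t) := by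
    apply IsPreconnected.image isPreconnected_Icc
    exact (Continuous.continuousOn (by continuity))
  have hsub : ((fun s : ℝ => x + s • (y - x)) '' Icc 0 t) ⊆ U ∪ (closure U)ᶜ := by
    rintro z ⟨s, hs, rfl⟩
    by_contra h
    push_neg at h
    have hz1 : x + s • (y - x) ∉ U := fun hh => h (Or.inl hh)
    have hz2 : x + s • (y - x) ∈ closure U := by
      by_contra hh; exact h (Or.inr hh)
    have hzfr : x + s • (y - x) ∈ frontier U := ⟨hz2, by rwa [hUopen.interior_eq]⟩
    rcases eq_or_lt_of_le hs.1 with rfl | hs0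
    · exact hz1 (by simpa using hx)
    · exact nofr s ⟨hs0, lt_of_le_of_lt hs.2 ht.2⟩ hzfr
  have hU : ((fun s : ℝ => x + s • (y - x)) '' Icc 0 t) ⊆ U := by
    apply hconn.subset_left_of_subset_union hUopen isClosed_closure.isOpen_compl
    · exact Set.disjoint_left.mpr fun z hz hz2 => hz2 (subset_closure hz)
    · exact hsub
    · exact ⟨x, ⟨0, ⟨le_refl 0, ht.1⟩, by simp⟩, hx⟩
  exact hU ⟨t, ⟨ht.1, le_refl t⟩, rfl⟩

/-- On the segment `[x, y)`, `u` agrees with `ρ x - t γ(x-y)`. -/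
lemma u_on_seg {n : ℕ} {K : Set (Euc n)} (hKcpt : IsCompact K) (hKconv : Convex ℝ K)
    (hK0 : (0 : Euc n) ∈ interior K)
    {U : Set (Euc n)} (hUopen : IsOpen U) (hUbdd : Bornology.IsBounded U)
    (hUfr : (frontier U).Nonempty)
    {φ : Euc n → ℝ} (hφcont : Continuous φ) (hφlip : StrictLipschitzWrt K φ)
    {u : Euc n → ℝ} (hudiff : ∀ z ∈ U, DifferentiableAt ℝ u z)
    (hugauge : ∀ z ∈ U, gauge (polarSet K) (gradient u z) ≤ 1)
    (hule : ∀ z ∈ closure U, u z ≤ rho K U φ z)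
    {x : Euc n} (hx : x ∈ U) (htouch : u x = rho K U φ x)
    {y : Euc n} (hy : y ∈ frontier U)
    (hmin : rho K U φ x = gauge K (x - y) + φ y) :
    ∀ t ∈ Ico (0:ℝ) 1, u (x + t • (y - x)) = rho K U φ x - t * gauge K (x - y) := by
  intro t ht
  set w : Euc n := x + t • (y - x) with hwdef
  have hwU : w ∈ U := seg_mem_U hKconv hK0 hUopen hUbdd hφcont hφlip hx hy hmin t ht
  have hxw : x - w = t • (x - y) := by
    rw [hwdef]; module
  have hwy : w - y = (1 - t) • (x - y) := by
    rw [hwdef]; module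
  have hgxw : gauge K (x - w) = t * gauge K (x - y) := by
    rw [hxw, gauge_smul_of_nonneg ht.1, smul_eq_mul]
  have hgwy : gauge K (w - y) = (1 - t) * gauge K (x - y) := by
    rw [hwy, gauge_smul_of_nonneg (by linarith [ht.2] : (0:ℝ) ≤ 1 - t), smul_eq_mul]
  -- upper bound
  have hupper : u w ≤ rho K U φ x - t * gauge K (x - y) := by
    have h1 : u w ≤ rho K U φ w := hule w (subset_closure hwU)
    have h2 : rho K U φ w ≤ gauge K (w - y) + φ y :=
      rho_le hKconv hK0 hUbdd hφcont hy w
    rw [hgwy] at h2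
    rw [hmin]
    linarith
  -- lower bound via Lipschitz property of u
  have hseg : ∀ s ∈ Icc (0:ℝ) 1, x + s • (w - x) ∈ U := by
    intro s hs
    have hwx : w - x = t • (y - x) := by rw [hwdef]; module
    have hrw : x + s • (w - x) = x + (s * t) • (y - x) := by
      rw [hwx, smul_smul]
    rw [hrw]
    apply seg_mem_U hKconv hK0 hUopen hUbdd hφcont hφlip hx hy hmin
    constructor
    · exact mul_nonneg hs.1 ht.1
    · calc s * t ≤ 1 * t := mul_le_mul_of_nonneg_right hs.2 ht.1
        _ = t := one_mul t
        _ < 1 := ht.2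
  have hlow : u x ≤ u w + gauge K (x - w) :=
    u_lip hKcpt hKconv hK0 hudiff hugauge x w hseg
  rw [hgxw, htouch] at hlow
  linarith

/-- The directional derivative identity at the touching point. -/
lemma inner_grad_eq {n : ℕ} {K : Set (Euc n)} (hKcpt : IsCompact K) (hKconv : Convex ℝ K)
    (hK0 : (0 : Euc n) ∈ interior K)
    {U : Set (Euc n)} (hUopen : IsOpen U) (hUbdd : Bornology.IsBounded U)
    (hUfr : (frontier U).Nonempty)
    {φ : Euc n → ℝ} (hφcont : Continuous φ) (hφlip : StrictLipschitzWrt K φ)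
    {u : Euc n → ℝ} (hudiff : ∀ z ∈ U, DifferentiableAt ℝ u z)
    (hugauge : ∀ z ∈ U, gauge (polarSet K) (gradient u z) ≤ 1)
    (hule : ∀ z ∈ closure U, u z ≤ rho K U φ z)
    {x : Euc n} (hx : x ∈ U) (htouch : u x = rho K U φ x)
    {y : Euc n} (hy : y ∈ frontier U)
    (hmin : rho K U φ x = gauge K (x - y) + φ y) :
    (inner ℝ (gradient u x) (x - y) : ℝ) = gauge K (x - y) := by
  set γxy : ℝ := gauge K (x - y) with hγ
  set g : ℝ → ℝ := fun t => u (x + t • (y - x)) with hg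
  have useg := u_on_seg hKcpt hKconv hK0 hUopen hUbdd hUfr hφcont hφlip hudiff hugauge
    hule hx htouch hy hmin
  have hgd : HasDerivAt g (inner ℝ (gradient u x) (y - x) : ℝ) 0 := by
    have hcd : HasDerivAt (fun t : ℝ => x + t • (y - x)) (y - x) 0 := by
      simpa using ((hasDerivAt_id (0:ℝ)).smul_const (y - x)).const_add x
    have hgrad : HasFDerivAt u ((InnerProductSpace.toDual ℝ (Euc n)) (gradient u x)) x :=
      hasGradientAt_iff_hasFDerivAt.mp (hudiff _ hx).hasGradientAt
    have h0 : (x + (0:ℝ) • (y - x)) = x := by simp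
    have := hgrad.comp_hasDerivAt_of_eq 0 hcd h0.symm
    rw [hg]
    simp only [InnerProductSpace.toDual_apply_apply] at this
    exact this
  have hA : HasDerivWithinAt g (inner ℝ (gradient u x) (y - x) : ℝ) (Ici 0) 0 :=
    hgd.hasDerivWithinAt
  have hB : HasDerivWithinAt g (-γxy) (Ici 0) 0 := by
    have hl : HasDerivAt (fun t : ℝ => rho K U φ x + t * (-γxy)) (-γxy) 0 :=
      (hasDerivAt_mul_const (-γxy)).const_add _
    apply hl.hasDerivWithinAt.congr_of_eventuallyEq
    · filter_upwards [Ico_mem_nhdsGE_of_mem (left_mem_Ico.mpr one_pos)] with t ht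
      rw [hg]
      simp only []
      rw [useg t ht]
      ring
    · rw [hg]
      simp only []
      rw [useg 0 (left_mem_Ico.mpr one_pos)]
      ring
  have hud : UniqueDiffWithinAt ℝ (Ici (0:ℝ)) 0 := uniqueDiffOn_Ici 0 0 self_mem_Ici
  have heq : (inner ℝ (gradient u x) (y - x) : ℝ) = -γxy := by
    rw [← hA.derivWithin hud, ← hB.derivWithin hud]
  have h2 : (inner ℝ (gradient u x) (x - y) : ℝ)
      = -(inner ℝ (gradient u x) (y - x) : ℝ) := by
    rw [← inner_neg_right, neg_sub]
  rw [h2, heq, neg_neg]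

/-- if `u` (continuous, differentiable in `U`, with `γ°(∇u) ≤ 1`, lying
below `ρ`, equal to `φ` on `∂U`) touches the obstacle `ρ` at `x ∈ U`, then `x` has a
unique `ρ`-closest point on `∂U`: there are no two distinct `ρ`-closest points. -/
theorem touching_point_unique_closest {n : ℕ}
    (K : Set (Euc n)) (hKcpt : IsCompact K) (hKconv : Convex ℝ K)
    (hK0 : (0 : Euc n) ∈ interior K) (hKstrict : StrictlyConvexGauge K)
    (U : Set (Euc n)) (hUopen : IsOpen U) (hUbdd : Bornology.IsBounded U)
    (hUfr : (frontier U).Nonempty)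
    (φ : Euc n → ℝ) (hφcont : Continuous φ) (hφlip : StrictLipschitzWrt K φ)
    (u : Euc n → ℝ) (hucont : ContinuousOn u (closure U))
    (hudiff : ∀ z ∈ U, DifferentiableAt ℝ u z)
    (hugauge : ∀ z ∈ U, gauge (polarSet K) (gradient u z) ≤ 1)
    (hule : ∀ z ∈ closure U, u z ≤ rho K U φ z)
    (hubd : EqOn u φ (frontier U))
    (x : Euc n) (hx : x ∈ U) (htouch : u x = rho K U φ x) :
    ¬ ∃ y z : Euc n, y ∈ frontier U ∧ z ∈ frontier U ∧ y ≠ z ∧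
      rho K U φ x = gauge K (x - y) + φ y ∧
      rho K U φ x = gauge K (x - z) + φ z := by
  rintro ⟨y, z, hy, hz, hyz, hminy, hminz⟩
  have habs : Absorbent ℝ K := absorbent_nhds_zero (mem_interior_iff_mem_nhds.mp hK0)
  have hnotU : ∀ w : Euc n, w ∈ frontier U → w ∉ U := by
    intro w hw h
    exact hw.2 (by rwa [hUopen.interior_eq])
  have hxyne : x - y ≠ 0 := sub_ne_zero.mpr (fun h => hnotU y hy (h ▸ hx))
  have hxzne : x - z ≠ 0 := sub_ne_zero.mpr (fun h => hnotU z hz (h ▸ hx))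
  set p : Euc n := gradient u x with hp
  have e₁ : (inner ℝ p (x - y) : ℝ) = gauge K (x - y) :=
    inner_grad_eq hKcpt hKconv hK0 hUopen hUbdd hUfr hφcont hφlip hudiff hugauge
      hule hx htouch hy hminy
  have e₂ : (inner ℝ p (x - z) : ℝ) = gauge K (x - z) :=
    inner_grad_eq hKcpt hKconv hK0 hUopen hUbdd hUfr hφcont hφlip hudiff hugauge
      hule hx htouch hz hminz
  have hineq : gauge K (x - y) + gauge K (x - z) ≤ gauge K ((x - y) + (x - z)) := by
    have := inner_le_gauge hKcpt hKconv hK0 (hugauge x hx) ((x - y) + (x - z))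
    rw [inner_add_right, e₁, e₂] at this
    exact this
  -- strict convexity forces parallelism
  have hpar : ∃ c : ℝ, 0 ≤ c ∧ ((x - y) = c • (x - z) ∨ (x - z) = c • (x - y)) := by
    by_contra h
    have := hKstrict (x - y) (x - z) h
    linarith
  -- auxiliary: a positive-multiple relation between x-y and x-z yields a contradiction
  have aux : ∀ y' z' : Euc n, y' ∈ frontier U → z' ∈ frontier U → y' ≠ z' →
      rho K U φ x = gauge K (x - y') + φ y' →
      rho K U φ x = gauge K (x - z') + φ z' →
      ∀ c : ℝ, 0 ≤ c → x - y' = c • (x - z') → False := by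
    intro y' z' hy' hz' hyz' hminy' hminz' c hc0 hcc
    have hy'ne : x - y' ≠ 0 := sub_ne_zero.mpr (fun h => hnotU y' hy' (h ▸ hx))
    have hz'ne : x - z' ≠ 0 := sub_ne_zero.mpr (fun h => hnotU z' hz' (h ▸ hx))
    have hcne : c ≠ 0 := by
      rintro rfl
      rw [zero_smul] at hcc
      exact hy'ne hcc
    rcases lt_trichotomy c 1 with hc1 | hc1 | hc1
    · -- y' lies on the open segment from x to z'
      have hrep : y' = x + c • (z' - x) := by
        have h1 : c • (z' - x) = -(c • (x - z')) := by rw [← smul_neg, neg_sub]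
        rw [h1, ← hcc]
        abel
      have : y' ∈ U := by
        rw [hrep]
        exact seg_mem_U hKconv hK0 hUopen hUbdd hφcont hφlip hx hz' hminz' c ⟨hc0, hc1⟩
      exact hnotU y' hy' this
    · -- c = 1 gives y' = z'
      apply hyz'
      rw [hc1, one_smul] at hcc
      rwa [sub_right_inj] at hcc
    · -- c > 1 : z' lies on the open segment from x to y'
      have hcc' : x - z' = c⁻¹ • (x - y') := by
        rw [hcc, smul_smul, inv_mul_cancel₀ hcne, one_smul]
      have hrep : z' = x + c⁻¹ • (y' - x) := by
        have h1 : c⁻¹ • (y' - x) = -(c⁻¹ • (x - y')) := by rw [← smul_neg, neg_sub]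
        rw [h1, ← hcc']
        abel
      have hc0' : (0:ℝ) ≤ c⁻¹ := inv_nonneg.mpr hc0
      have hc1' : c⁻¹ < 1 := by
        rw [inv_lt_one_iff₀]
        right; exact hc1
      have : z' ∈ U := by
        rw [hrep]
        exact seg_mem_U hKconv hK0 hUopen hUbdd hφcont hφlip hx hy' hminy' c⁻¹ ⟨hc0', hc1'⟩
      exact hnotU z' hz' this
  obtain ⟨c, hc0, hcase | hcase⟩ := hpar
  · exact aux y z hy hz hyz hminy hminz c hc0 hcase
  · exact aux z y hz hy hyz.symm hminz hminy c hc0 hcase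
end
end

section
/- Let K ⊆ ℝⁿ be a compact convex set with 0 in its interior, γ its gauge and γ° the gauge of the polar K°. Let U ⊆ ℝⁿ be a bounded open set with nonempty boundary, and let φ : ℝⁿ → ℝ be continuous and satisfy the strict Lipschitz property. Let u : closure(U) → ℝ be continuous, differentiable at every point of U with γ°(∇u(z)) ≤ 1 for all z ∈ U, satisfying u ≤ ρ on closure(U) and u = φ on ∂U. If x ∈ U satisfies u(x) = ρ(x) and y ∈ ∂U is a ρ-closest point to x, then u(z) = ρ(z) for every z in the half-open segment [x, y) = {x + t(y − x) : 0 ≤ t < 1}. -/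
open Set Filter Topology MeasureTheory
open scoped NNReal

noncomputable section

/-- Duality: if `γ°(p) ≤ 1` then `⟨p, v⟩ ≤ γ(v)` for all `v`. -/
lemma rinner_le_gauge_aux {n : ℕ} {K : Set (Euc n)} (hKcpt : IsCompact K)
    (hK0 : (0 : Euc n) ∈ interior K) {p : Euc n}
    (hp : gauge (polarSet K) p ≤ 1) (v : Euc n) : rinner p v ≤ gauge K v := by
  obtain ⟨R, hR⟩ := isBounded_iff_forall_norm_le.1 hKcpt.isBounded
  set R' : ℝ := max R 1 with hR'def
  have hR'0 : (0:ℝ) < R' := lt_of_lt_of_le one_pos (le_max_right _ _)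
  have hball : Metric.closedBall (0 : Euc n) R'⁻¹ ⊆ polarSet K := by
    intro q hq w hw
    have h1 : ‖q‖ ≤ R'⁻¹ := by simpa using Metric.mem_closedBall.mp hq
    have h2 : ‖w‖ ≤ R' := (hR w hw).trans (le_max_left _ _)
    calc rinner q w ≤ ‖q‖ * ‖w‖ := real_inner_le_norm q w
    _ ≤ R'⁻¹ * R' := mul_le_mul h1 h2 (norm_nonneg _) (by positivity)
    _ = 1 := inv_mul_cancel₀ hR'0.ne'
  have habs : Absorbent ℝ (polarSet K) :=
    absorbent_nhds_zero (Filter.mem_of_superset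
      (Metric.closedBall_mem_nhds 0 (by positivity)) hball)
  have hpK : ∀ w ∈ K, rinner p w ≤ 1 := by
    intro w hw
    refine le_of_forall_pos_le_add fun ε hε => ?_
    obtain ⟨b, hb0, hb1, q, hq, hbq⟩ := exists_lt_of_gauge_lt habs
      (lt_of_le_of_lt hp (lt_add_of_pos_right 1 hε))
    have heq : rinner p w = b * rinner q w := by
      rw [← hbq]; simpa [rinner] using real_inner_smul_left q w b
    nlinarith [hq w hw]
  by_contra hcon
  push_neg at hcon
  have habsK : Absorbent ℝ K := absorbent_nhds_zero (mem_interior_iff_mem_nhds.mp hK0)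
  obtain ⟨b, hb0, hbμ, q, hqK, hbq⟩ := exists_lt_of_gauge_lt habsK hcon
  have heq : rinner p v = b * rinner p q := by
    rw [← hbq]; simpa [rinner] using real_inner_smul_right p q b
  nlinarith [hpK q hqK]

/-- if `u` (continuous, differentiable in `U`, with `γ°(∇u) ≤ 1`, lying
below `ρ` and equal to `φ` on `∂U`) touches the obstacle `ρ` at `x ∈ U`, and `y ∈ ∂U`
is a `ρ`-closest point to `x`, then `u = ρ` along the half-open segment `[x, y)`. -/
theorem segment_is_plastic {n : ℕ}
    (K : Set (Euc n)) (hKcpt : IsCompact K) (hKconv : Convex ℝ K)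
    (hK0 : (0 : Euc n) ∈ interior K)
    (U : Set (Euc n)) (hUopen : IsOpen U) (hUbdd : Bornology.IsBounded U)
    (hUfr : (frontier U).Nonempty)
    (φ : Euc n → ℝ) (hφcont : Continuous φ) (hφlip : StrictLipschitzWrt K φ)
    (u : Euc n → ℝ) (hucont : ContinuousOn u (closure U))
    (hudiff : ∀ z ∈ U, DifferentiableAt ℝ u z)
    (hugauge : ∀ z ∈ U, gauge (polarSet K) (gradient u z) ≤ 1)
    (hule : ∀ z ∈ closure U, u z ≤ rho K U φ z)
    (hubd : EqOn u φ (frontier U))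
    (x : Euc n) (hx : x ∈ U) (htouch : u x = rho K U φ x)
    (y : Euc n) (hy : y ∈ frontier U)
    (hclosest : rho K U φ x = gauge K (x - y) + φ y) :
    ∀ t : ℝ, 0 ≤ t → t < 1 →
      u (x + t • (y - x)) = rho K U φ (x + t • (y - x)) := by
  -- basic facts
  have hyU : y ∉ U := by
    have h := hy
    rw [frontier, hUopen.interior_eq] at h
    exact h.2
  have hxy : x ≠ y := fun h => hyU (h ▸ hx)
  -- compactness of the frontier and lower-boundedness of the rho-defining sets
  have hclcpt : IsCompact (closure U) :=
    Metric.isCompact_of_isClosed_isBounded isClosed_closure hUbdd.closure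
  have hfrcpt : IsCompact (frontier U) :=
    hclcpt.of_isClosed_subset isClosed_frontier frontier_subset_closure
  have hbdd : ∀ w : Euc n, BddBelow ((fun z => gauge K (w - z) + φ z) '' frontier U) := by
    intro w
    obtain ⟨m, hm⟩ := hfrcpt.bddBelow_image hφcont.continuousOn
    refine ⟨m, ?_⟩
    rintro _ ⟨z, hz, rfl⟩
    have h1 : m ≤ φ z := hm ⟨z, hz, rfl⟩
    have h2 : 0 ≤ gauge K (w - z) := gauge_nonneg _
    show m ≤ gauge K (w - z) + φ z
    linarith
  have hrho_le : ∀ w : Euc n, ∀ z ∈ frontier U, rho K U φ w ≤ gauge K (w - z) + φ z :=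
    fun w z hz => csInf_le (hbdd w) ⟨z, hz, rfl⟩
  -- the segment [x, y) stays inside U
  set L : ℝ → Euc n := fun t => x + t • (y - x) with hLdef
  have hLcont : Continuous L := by
    simp only [hLdef]; fun_prop
  have hseg : ∀ t : ℝ, 0 ≤ t → t < 1 → L t ∈ U := by
    by_contra hcon
    push_neg at hcon
    obtain ⟨s₀, hs₀0, hs₀1, hs₀U⟩ := hcon
    set T : Set ℝ := {t | t ∈ Set.Ico (0:ℝ) 1 ∧ L t ∉ U} with hT
    have hTne : T.Nonempty := ⟨s₀, ⟨hs₀0, hs₀1⟩, hs₀U⟩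
    have hTbd : BddBelow T := ⟨0, fun t ht => ht.1.1⟩
    set s := sInf T with hsdef
    have hsT2 : L s ∉ U := by
      have hcl : s ∈ closure T := csInf_mem_closure hTne hTbd
      have hsub : closure T ⊆ L ⁻¹' Uᶜ := by
        apply closure_minimal ?_ (hUopen.isClosed_compl.preimage hLcont)
        exact fun t ht => ht.2
      exact hsub hcl
    have hs0 : 0 ≤ s := le_csInf hTne fun t ht => ht.1.1
    have hs1 : s < 1 := lt_of_le_of_lt (csInf_le hTbd ⟨⟨hs₀0, hs₀1⟩, hs₀U⟩) hs₀1
    have hspos : 0 < s := by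
      rcases hs0.lt_or_eq with h | h
      · exact h
      · exfalso; apply hsT2; rw [← h]; simpa [hLdef] using hx
    have hbefore : ∀ t, 0 ≤ t → t < s → L t ∈ U := by
      intro t ht0 hts
      by_contra hnt
      exact absurd (csInf_le hTbd ⟨⟨ht0, hts.trans hs1⟩, hnt⟩) (not_le.mpr hts)
    have hclU : L s ∈ closure U := by
      have h1 : s ∈ closure (Set.Ico 0 s) := by
        rw [closure_Ico hspos.ne]
        exact ⟨hs0, le_refl s⟩
      have h2 : L s ∈ L '' closure (Set.Ico 0 s) := ⟨s, h1, rfl⟩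
      have h3 : L '' closure (Set.Ico 0 s) ⊆ closure (L '' Set.Ico 0 s) :=
        image_closure_subset_closure_image hLcont
      have h4 : L '' Set.Ico 0 s ⊆ U := by
        rintro _ ⟨t, ⟨ht0, hts⟩, rfl⟩; exact hbefore t ht0 hts
      exact closure_mono h4 (h3 h2)
    have hyfr : L s ∈ frontier U := by
      rw [frontier, hUopen.interior_eq]; exact ⟨hclU, hsT2⟩
    have hy'B : L s - y = (1 - s) • (x - y) := by
      simp only [hLdef]; module
    have hy'ne : L s ≠ y := by
      intro h
      rw [h, sub_self] at hy'B
      rcases smul_eq_zero.mp hy'B.symm with h1 | h2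
      · linarith [sub_eq_zero.mp h1]
      · exact hxy (sub_eq_zero.mp h2)
    have h1 : rho K U φ x ≤ gauge K (x - L s) + φ (L s) := hrho_le x (L s) hyfr
    have hg1 : gauge K (x - L s) = s * gauge K (x - y) := by
      rw [show x - L s = s • (x - y) by simp only [hLdef]; module,
        gauge_smul_of_nonneg hs0, smul_eq_mul]
    have hg2 : gauge K (L s - y) = (1 - s) * gauge K (x - y) := by
      rw [hy'B, gauge_smul_of_nonneg (by linarith : (0:ℝ) ≤ 1 - s), smul_eq_mul]
    have hφlt : φ (L s) - φ y < gauge K (L s - y) := (hφlip (L s) y hy'ne).2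
    rw [hclosest] at h1
    rw [hg2] at hφlt
    rw [hg1] at h1
    linarith
  -- main argument for a fixed t
  intro t ht0 ht1
  set γ : ℝ := gauge K (x - y) with hγdef
  have hzU : x + t • (y - x) ∈ U := hseg t ht0 ht1
  have h2 : u (x + t • (y - x)) ≤ rho K U φ (x + t • (y - x)) :=
    hule _ (subset_closure hzU)
  have h1 : rho K U φ (x + t • (y - x)) ≤ (1 - t) * γ + φ y := by
    have h := hrho_le (x + t • (y - x)) y hy
    rwa [show x + t • (y - x) - y = (1 - t) • (x - y) by module,
      gauge_smul_of_nonneg (by linarith : (0:ℝ) ≤ 1 - t), smul_eq_mul] at h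
  -- Lipschitz bound along the segment via the gradient
  have h3 : u x ≤ u (x + t • (y - x)) + t * γ := by
    set h : ℝ → ℝ := fun s => u (x + s • (y - x)) + s * γ with hhdef
    have hmem : ∀ s ∈ Set.Icc (0:ℝ) t, x + s • (y - x) ∈ U :=
      fun s hs => hseg s hs.1 (lt_of_le_of_lt hs.2 ht1)
    have hcont : ContinuousOn h (Set.Icc 0 t) := by
      apply ContinuousOn.add
      · exact hucont.comp ((by fun_prop : Continuous fun s : ℝ => x + s • (y - x)).continuousOn)
          (fun s hs => subset_closure (hmem s hs))
      · exact (continuous_id.mul continuous_const).continuousOn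
    have hderiv : ∀ s ∈ Set.Ioo (0:ℝ) t,
        HasDerivAt h (rinner (gradient u (x + s • (y - x))) (y - x) + γ) s := by
      intro s hs
      have hzsU : x + s • (y - x) ∈ U := hmem s ⟨hs.1.le, hs.2.le⟩
      have hfd := ((hudiff _ hzsU).hasGradientAt).hasFDerivAt
      have hL : HasDerivAt (fun s : ℝ => x + s • (y - x)) (y - x) s := by
        simpa using ((hasDerivAt_id s).smul_const (y - x)).const_add x
      have hcomp := hfd.comp_hasDerivAt s hL
      have h' : HasDerivAt (fun s : ℝ => u (x + s • (y - x)))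
          (rinner (gradient u (x + s • (y - x))) (y - x)) s := by
        simpa [rinner, InnerProductSpace.toDual_apply_apply, Function.comp_def] using hcomp
      exact h'.add (hasDerivAt_mul_const γ)
    have hmono : MonotoneOn h (Set.Icc 0 t) := by
      apply monotoneOn_of_deriv_nonneg (convex_Icc 0 t) hcont
      · intro s hs
        rw [interior_Icc] at hs
        exact ((hderiv s hs).differentiableAt).differentiableWithinAt
      · intro s hs
        rw [interior_Icc] at hs
        rw [(hderiv s hs).deriv]
        have hb := rinner_le_gauge_aux hKcpt hK0
          (hugauge _ (hmem s ⟨hs.1.le, hs.2.le⟩)) (x - y)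
        have hneg : rinner (gradient u (x + s • (y - x))) (y - x)
            = - rinner (gradient u (x + s • (y - x))) (x - y) := by
          rw [show y - x = -(x - y) from (neg_sub x y).symm]
          simp only [rinner, inner_neg_right]
        rw [hneg]
        simp only [hγdef]
        linarith
    have hfin := hmono (Set.left_mem_Icc.mpr ht0) (Set.right_mem_Icc.mpr ht0) ht0
    simpa [hhdef] using hfin
  have hux : u x = γ + φ y := htouch.trans hclosest
  linarith
end
end

section
/- Let K ⊆ ℝⁿ be a compact convex set with 0 in its interior whose gauge γ is strictly convex, let U ⊆ ℝⁿ be a bounded open set with nonempty boundary, and let φ : ℝⁿ → ℝ be continuous and satisfy the strict Lipschitz property. If for some x ∈ U there exist two distinct points y, z ∈ ∂U with ρ(x) = γ(x − y) + φ(y) = γ(x − z) + φ(z), then ρ is not differentiable at x. -/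
open Set Filter Topology MeasureTheory
open scoped NNReal

noncomputable section

-- helper: derivative bound from right slope
lemma deriv_le_of_right_slope {h : ℝ → ℝ} {d c : ℝ} (hd : HasDerivAt h d 0)
    (hineq : ∀ᶠ t in 𝓝[>] (0:ℝ), h t - h 0 ≤ t * c) : d ≤ c := by
  have hslope : Tendsto (slope h 0) (𝓝[>] (0:ℝ)) (𝓝 d) :=
    ((hasDerivAt_iff_tendsto_slope.mp hd).mono_left
      (nhdsWithin_mono _ (fun t ht => ne_of_gt ht)))
  refine le_of_tendsto hslope ?_
  filter_upwards [hineq, self_mem_nhdsWithin] with t ht ht0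
  have hs : slope h 0 t = (h t - h 0) / t := by
    rw [slope_def_field]; ring_nf
  rw [hs, div_le_iff₀ ht0]
  linarith [ht]


/-- if `x ∈ U` has two distinct `ρ`-closest points on `∂U`, then `ρ` is
not differentiable at `x`. -/
theorem rho_not_differentiableAt_of_two_closest {n : ℕ}
    (K : Set (Euc n)) (hKcpt : IsCompact K) (hKconv : Convex ℝ K)
    (hK0 : (0 : Euc n) ∈ interior K) (hKstrict : StrictlyConvexGauge K)
    (U : Set (Euc n)) (hUopen : IsOpen U) (hUbdd : Bornology.IsBounded U)
    (hUfr : (frontier U).Nonempty)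
    (φ : Euc n → ℝ) (hφcont : Continuous φ) (hφlip : StrictLipschitzWrt K φ)
    (x : Euc n) (hx : x ∈ U)
    (y z : Euc n) (hy : y ∈ frontier U) (hz : z ∈ frontier U) (hyz : y ≠ z)
    (hry : rho K U φ x = gauge K (x - y) + φ y)
    (hrz : rho K U φ x = gauge K (x - z) + φ z) :
    ¬ DifferentiableAt ℝ (rho K U φ) x := by
  intro hD
  have habs : Absorbent ℝ K := absorbent_nhds_zero (mem_interior_iff_mem_nhds.mp hK0)
  have hsub : ∀ a b : Euc n, gauge K (a + b) ≤ gauge K a + gauge K b :=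
    gauge_add_le hKconv habs
  have hfr_cpt : IsCompact (frontier U) :=
    Metric.isCompact_of_isClosed_isBounded isClosed_frontier
      (hUbdd.closure.subset frontier_subset_closure)
  obtain ⟨w0, hw0, hmin⟩ := hfr_cpt.exists_isMinOn hUfr hφcont.continuousOn
  have hbdd : ∀ x' : Euc n, BddBelow ((fun w => gauge K (x' - w) + φ w) '' frontier U) := by
    intro x'; refine ⟨φ w0, ?_⟩; rintro _ ⟨w, hw, rfl⟩
    exact le_add_of_nonneg_of_le (gauge_nonneg _) (hmin hw)
  have hrle : ∀ (x' w : Euc n), w ∈ frontier U → rho K U φ x' ≤ gauge K (x' - w) + φ w :=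
    fun x' w hw => csInf_le (hbdd x') ⟨w, hw, rfl⟩
  have hler : ∀ (x' : Euc n) (c : ℝ), (∀ w ∈ frontier U, c ≤ gauge K (x' - w) + φ w) →
      c ≤ rho K U φ x' := by
    intro x' c hc
    exact le_csInf (hUfr.image _) (by rintro _ ⟨w, hw, rfl⟩; exact hc w hw)
  -- growth bound
  have hA : ∀ (v : Euc n) (t : ℝ), 0 ≤ t →
      rho K U φ (x + t • v) ≤ rho K U φ x + t * gauge K v := by
    intro v t ht
    have h1 : rho K U φ (x + t • v) - t * gauge K v ≤ rho K U φ x := by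
      apply hler
      intro w hw
      have h2 := hrle (x + t • v) w hw
      have e : x + t • v - w = t • v + (x - w) := by abel
      have h3 : gauge K (x + t • v - w) ≤ t * gauge K v + gauge K (x - w) := by
        rw [e]
        calc gauge K (t • v + (x - w)) ≤ gauge K (t • v) + gauge K (x - w) := hsub _ _
          _ = t * gauge K v + gauge K (x - w) := by
              rw [gauge_smul_of_nonneg ht, smul_eq_mul]
      linarith
    linarith
  -- derivative along lines
  set L := fderiv ℝ (rho K U φ) x with hL
  have hline : ∀ v : Euc n,
      HasDerivAt (fun t : ℝ => rho K U φ (x + t • v)) (L v) 0 := by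
    intro v
    have hg : HasDerivAt (fun t : ℝ => x + t • v) v 0 := by
      simpa using ((hasDerivAt_id (0 : ℝ)).smul_const v).const_add x
    have hf : HasFDerivAt (rho K U φ) L ((fun t : ℝ => x + t • v) 0) := by
      simpa using hD.hasFDerivAt
    exact hf.comp_hasDerivAt 0 hg
  have hzero : ∀ v : Euc n, x + (0 : ℝ) • v = x := by intro v; simp
  -- upper bound L v ≤ gauge v
  have hLle : ∀ v : Euc n, L v ≤ gauge K v := by
    intro v
    refine deriv_le_of_right_slope (hline v) ?_
    filter_upwards [self_mem_nhdsWithin] with t ht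
    have := hA v t (le_of_lt ht)
    rw [hzero v]
    linarith
  -- exact decrease towards a closest point
  have hB : ∀ (y' : Euc n), y' ∈ frontier U →
      rho K U φ x = gauge K (x - y') + φ y' → L (y' - x) ≤ -gauge K (x - y') := by
    intro y' hy' hr'
    refine deriv_le_of_right_slope (hline (y' - x)) ?_
    filter_upwards [Ioo_mem_nhdsGT_of_mem (by norm_num : (0:ℝ) ∈ Set.Ico (0:ℝ) 1)]
      with t ht
    obtain ⟨ht0, ht1⟩ := ht
    rw [hzero]
    have e : x + t • (y' - x) - y' = (1 - t) • (x - y') := by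
      module
    have h2 : rho K U φ (x + t • (y' - x)) ≤ (1 - t) * gauge K (x - y') + φ y' := by
      have := hrle (x + t • (y' - x)) y' hy'
      rwa [e, gauge_smul_of_nonneg (by linarith : (0:ℝ) ≤ 1 - t), smul_eq_mul] at this
    have := hr'
    linarith [mul_comm t (gauge K (x - y'))]
  -- lower bounds for L on p and q
  have hLge : ∀ (y' : Euc n), y' ∈ frontier U →
      rho K U φ x = gauge K (x - y') + φ y' → gauge K (x - y') ≤ L (x - y') := by
    intro y' hy' hr'
    have h1 := hB y' hy' hr'
    have h2 : y' - x = -(x - y') := by abel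
    rw [h2, map_neg] at h1
    linarith
  have hLp := hLge y hy hry
  have hLq := hLge z hz hrz
  have hsum : gauge K (x - y) + gauge K (x - z) ≤ gauge K ((x - y) + (x - z)) := by
    have h1 : L ((x - y) + (x - z)) ≤ gauge K ((x - y) + (x - z)) := hLle _
    rw [map_add] at h1
    linarith
  -- collinearity case analysis
  have key : ∀ (y' z' : Euc n), y' ∈ frontier U → z' ∈ frontier U → y' ≠ z' →
      rho K U φ x = gauge K (x - y') + φ y' → rho K U φ x = gauge K (x - z') + φ z' →
      ∀ c : ℝ, 0 ≤ c → x - y' = c • (x - z') → False := by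
    intro y' z' hy' hz' hyz' hry' hrz' c hc0 hpq
    have hgp : gauge K (x - y') = c * gauge K (x - z') := by
      rw [hpq, gauge_smul_of_nonneg hc0, smul_eq_mul]
    have hφeq : φ y' - φ z' = (1 - c) * gauge K (x - z') := by
      rw [hry'] at hrz'; linarith [hgp, hrz']
    have hyz'eq : y' - z' = (1 - c) • (x - z') := by
      calc y' - z' = (x - z') - (x - y') := by abel
        _ = (x - z') - c • (x - z') := by rw [hpq]
        _ = (1 - c) • (x - z') := by rw [sub_smul, one_smul]
    rcases lt_trichotomy c 1 with hc1 | hc1 | hc1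
    · have hg : gauge K (y' - z') = (1 - c) * gauge K (x - z') := by
        rw [hyz'eq, gauge_smul_of_nonneg (by linarith : (0:ℝ) ≤ 1 - c), smul_eq_mul]
      have := (hφlip y' z' hyz').2
      rw [hg] at this
      linarith
    · apply hyz'
      have : y' - z' = 0 := by rw [hyz'eq, hc1]; simp
      have := sub_eq_zero.mp this
      exact this
    · have hzy : z' - y' = (c - 1) • (x - z') := by
        rw [← neg_sub y' z', hyz'eq, ← neg_smul]; ring_nf
      have hg : gauge K (z' - y') = (c - 1) * gauge K (x - z') := by
        rw [hzy, gauge_smul_of_nonneg (by linarith : (0:ℝ) ≤ c - 1), smul_eq_mul]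
      have := (hφlip y' z' hyz').1
      rw [hg] at this
      linarith
  by_cases hc : ∃ c : ℝ, 0 ≤ c ∧ ((x - y) = c • (x - z) ∨ (x - z) = c • (x - y))
  · obtain ⟨c, hc0, hcase | hcase⟩ := hc
    · exact key y z hy hz hyz hry hrz c hc0 hcase
    · exact key z y hz hy hyz.symm hrz hry c hc0 hcase
  · exact absurd hsum (not_le.mpr (hKstrict (x - y) (x - z) hc))
end
end

section
/- Let K ⊆ ℝⁿ be a compact convex set with 0 in its interior, γ its gauge, U ⊆ ℝⁿ a bounded open set with nonempty boundary, and φ : ℝⁿ → ℝ continuous. Suppose y ∈ ∂U is a ρ-closest point to x ∈ U. Then: (a) y is a ρ-closest point to every point of the open segment (x, y) = {x + t(y − x) : 0 < t < 1}, and ρ varies linearly along [x, y]: for 0 ≤ t ≤ γ(x − y), ρ(x − (t/γ(x − y))(x − y)) = γ(x − y) − t + φ(y); (b) if in addition φ satisfies the strict Lipschitz property, then the open segment (x, y) is contained in U. -/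
open Set Filter Topology MeasureTheory
open scoped NNReal

noncomputable section

/-- if `y ∈ ∂U` is a `ρ`-closest point to `x ∈ U`, then (a) `y` is a
`ρ`-closest point to every point of the open segment `(x, y)`, and `ρ` varies linearly
along `[x, y]`; (b) if moreover `φ` is strictly Lipschitz, the open segment `(x, y)`
lies in `U`. -/
theorem closest_point_segment {n : ℕ}
    (K : Set (Euc n)) (hKcpt : IsCompact K) (hKconv : Convex ℝ K)
    (hK0 : (0 : Euc n) ∈ interior K)
    (U : Set (Euc n)) (hUopen : IsOpen U) (hUbdd : Bornology.IsBounded U)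
    (hUfr : (frontier U).Nonempty)
    (φ : Euc n → ℝ) (hφcont : Continuous φ)
    (x : Euc n) (hx : x ∈ U)
    (y : Euc n) (hy : y ∈ frontier U)
    (hclosest : rho K U φ x = gauge K (x - y) + φ y) :
    (∀ t : ℝ, 0 < t → t < 1 →
      rho K U φ (x + t • (y - x)) =
        gauge K ((x + t • (y - x)) - y) + φ y) ∧
    (∀ t : ℝ, 0 ≤ t → t ≤ gauge K (x - y) →
      rho K U φ (x - (t / gauge K (x - y)) • (x - y)) = gauge K (x - y) - t + φ y) ∧
    (StrictLipschitzWrt K φ → ∀ t : ℝ, 0 < t → t < 1 → x + t • (y - x) ∈ U) := by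
  have habs : Absorbent ℝ K := absorbent_nhds_zero (mem_interior_iff_mem_nhds.mp hK0)
  have hvnb : Bornology.IsVonNBounded ℝ K := NormedSpace.isVonNBounded_of_isBounded ℝ hKcpt.isBounded
  have hyU : y ∉ U := fun hyU =>
    (by simp [hUopen.inter_frontier_eq] : y ∉ U ∩ frontier U) ⟨hyU, hy⟩
  have hxy : x ≠ y := fun h => hyU (h ▸ hx)
  set g : ℝ := gauge K (x - y) with hg
  have hgpos : 0 < g := (gauge_pos habs hvnb).mpr (sub_ne_zero.mpr hxy)
  have hfrcpt : IsCompact (frontier U) := by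
    refine Metric.isCompact_of_isClosed_isBounded isClosed_frontier ?_
    exact hUbdd.closure.subset frontier_subset_closure
  obtain ⟨m, hmfr, hmin⟩ := hfrcpt.exists_isMinOn hUfr (hφcont.continuousOn)
  have hbdd : ∀ z : Euc n, BddBelow ((fun w => gauge K (z - w) + φ w) '' frontier U) := by
    intro z
    refine ⟨φ m, ?_⟩
    rintro a ⟨w, hwfr, rfl⟩
    have h1 : φ m ≤ φ w := hmin hwfr
    have h2 : (0:ℝ) ≤ gauge K (z - w) := gauge_nonneg _
    simp only []
    linarith
  have hle : ∀ z : Euc n, ∀ w ∈ frontier U, rho K U φ z ≤ gauge K (z - w) + φ w := by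
    intro z w hw
    exact csInf_le (hbdd z) ⟨w, hw, rfl⟩
  have key : ∀ s : ℝ, 0 ≤ s → s ≤ 1 →
      rho K U φ (x + s • (y - x)) = (1 - s) * g + φ y := by
    intro s hs0 hs1
    set p : Euc n := x + s • (y - x) with hp
    have hpy : p - y = (1 - s) • (x - y) := by rw [hp]; module
    have hxp : x - p = s • (x - y) := by rw [hp]; module
    have hgpy : gauge K (p - y) = (1 - s) * g := by
      rw [hpy, gauge_smul_of_nonneg (by linarith : (0:ℝ) ≤ 1 - s)]
      rfl
    have hgxp : gauge K (x - p) = s * g := by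
      rw [hxp, gauge_smul_of_nonneg hs0]
      rfl
    have hub : rho K U φ p ≤ (1 - s) * g + φ y := by
      have := hle p y hy
      rwa [hgpy] at this
    have hlb : (1 - s) * g + φ y ≤ rho K U φ p := by
      refine le_csInf ⟨_, ⟨y, hy, rfl⟩⟩ ?_
      rintro a ⟨w, hw, rfl⟩
      have htri : gauge K (x - w) ≤ gauge K (x - p) + gauge K (p - w) := by
        have h := gauge_add_le hKconv habs (x - p) (p - w)
        simpa [sub_add_sub_cancel] using h
      have h1 := hle x w hw
      rw [hclosest] at h1
      rw [hgxp] at htri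
      simp only []
      linarith
    linarith
  refine ⟨?_, ?_, ?_⟩
  · intro t ht0 ht1
    have hgy : gauge K ((x + t • (y - x)) - y) = (1 - t) * g := by
      have h : (x + t • (y - x)) - y = (1 - t) • (x - y) := by module
      rw [h, gauge_smul_of_nonneg (by linarith : (0:ℝ) ≤ 1 - t)]
      rfl
    rw [key t ht0.le ht1.le, hgy]
  · intro t ht0 htg
    have hs : x - (t / g) • (x - y) = x + (t / g) • (y - x) := by module
    rw [hs, key (t / g) (div_nonneg ht0 hgpos.le) (by rw [div_le_one hgpos]; exact htg)]
    field_simp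
  · intro hSL t ht0 ht1
    by_contra hnot
    set c : ℝ → Euc n := fun u => x + u • (y - x) with hc
    have hccont : Continuous c := by
      apply Continuous.add continuous_const
      exact (continuous_id.smul continuous_const)
    set A : Set ℝ := Icc 0 t ∩ c ⁻¹' Uᶜ with hA
    have hAclosed : IsClosed A :=
      isClosed_Icc.inter (hUopen.isClosed_compl.preimage hccont)
    have hAne : A.Nonempty := ⟨t, ⟨ht0.le, le_refl t⟩, hnot⟩
    have hAbdd : BddBelow A := ⟨0, fun u hu => hu.1.1⟩
    set u₀ : ℝ := sInf A with hu₀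
    have hu₀A : u₀ ∈ A := hAclosed.csInf_mem hAne hAbdd
    have hu₀0 : 0 ≤ u₀ := hu₀A.1.1
    have hu₀t : u₀ ≤ t := hu₀A.1.2
    have hu₀pos : 0 < u₀ := by
      rcases eq_or_lt_of_le hu₀0 with h | h
      · exfalso
        apply hu₀A.2
        simp only [hc, mem_preimage, ← h, zero_smul, add_zero]
        exact hx
      · exact h
    set z : Euc n := c u₀ with hz
    have hzcl : z ∈ closure U := by
      have himg : c '' Ico 0 u₀ ⊆ U := by
        rintro _ ⟨u, ⟨hu0, huu⟩, rfl⟩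
        by_contra hcu
        exact absurd (csInf_le hAbdd ⟨⟨hu0, huu.le.trans hu₀t⟩, hcu⟩) (not_le.mpr huu)
      have hmem : z ∈ c '' closure (Ico 0 u₀) :=
        ⟨u₀, by rw [closure_Ico (ne_of_lt hu₀pos)]; exact ⟨hu₀0, le_refl _⟩, rfl⟩
      exact closure_mono himg (image_closure_subset_closure_image hccont hmem)
    have hzfr : z ∈ frontier U := by
      rw [hUopen.frontier_eq]
      exact ⟨hzcl, hu₀A.2⟩
    have hgxz : gauge K (x - z) = u₀ * g := by
      have h : x - z = u₀ • (x - y) := by simp only [hz, hc]; module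
      rw [h, gauge_smul_of_nonneg hu₀0]
      rfl
    have hgzy : gauge K (z - y) = (1 - u₀) * g := by
      have h : z - y = (1 - u₀) • (x - y) := by simp only [hz, hc]; module
      rw [h, gauge_smul_of_nonneg (by linarith [hu₀t.trans_lt ht1] : (0:ℝ) ≤ 1 - u₀)]
      rfl
    have hzy : z ≠ y := by
      intro h
      have h0 : (1 - u₀) * g = 0 := by rw [← hgzy, h, sub_self, gauge_zero]
      rcases mul_eq_zero.mp h0 with h' | h'
      · have : u₀ = 1 := by linarith
        linarith [hu₀t.trans_lt ht1]
      · exact absurd h' (ne_of_gt hgpos)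
    have hSLzy := (hSL z y hzy).2
    rw [hgzy] at hSLzy
    have h1 := hle x z hzfr
    rw [hclosest, hgxz] at h1
    nlinarith [hu₀pos, hgpos]
end
end

section
/- Let K ⊆ ℝⁿ be a compact convex set with 0 in its interior whose gauge γ is strictly convex, let U ⊆ ℝⁿ be a bounded open set with nonempty boundary, and let φ : ℝⁿ → ℝ be continuous and satisfy the strict Lipschitz property. Suppose y ∈ ∂U is a ρ-closest point to x ∈ U. Then for every z in the open segment (x, y) = {x + t(y − x) : 0 < t < 1}, y is the unique ρ-closest point to z on ∂U. -/
open Set Filter Topology MeasureTheory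
open scoped NNReal

noncomputable section

/-- when the gauge is strictly convex and `φ` is strictly Lipschitz, a
`ρ`-closest point `y` to `x ∈ U` is the *unique* `ρ`-closest point to every point of
the open segment `(x, y)`. -/
theorem unique_closest_on_open_segment {n : ℕ}
    (K : Set (Euc n)) (hKcpt : IsCompact K) (hKconv : Convex ℝ K)
    (hK0 : (0 : Euc n) ∈ interior K) (hKstrict : StrictlyConvexGauge K)
    (U : Set (Euc n)) (hUopen : IsOpen U) (hUbdd : Bornology.IsBounded U)
    (hUfr : (frontier U).Nonempty)
    (φ : Euc n → ℝ) (hφcont : Continuous φ) (hφlip : StrictLipschitzWrt K φ)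
    (x : Euc n) (hx : x ∈ U)
    (y : Euc n) (hy : y ∈ frontier U)
    (hclosest : rho K U φ x = gauge K (x - y) + φ y) :
    ∀ t : ℝ, 0 < t → t < 1 →
      (rho K U φ (x + t • (y - x)) = gauge K ((x + t • (y - x)) - y) + φ y) ∧
      (∀ y' : Euc n, y' ∈ frontier U →
        rho K U φ (x + t • (y - x)) = gauge K ((x + t • (y - x)) - y') + φ y' →
        y' = y) := by
  have hKnhds : K ∈ 𝓝 (0 : Euc n) := mem_interior_iff_mem_nhds.1 hK0
  have habs : Absorbent ℝ K := absorbent_nhds_zero hKnhds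
  have htri : ∀ a b : Euc n, gauge K (a + b) ≤ gauge K a + gauge K b :=
    gauge_add_le hKconv habs
  have hsm : ∀ (r : ℝ), 0 ≤ r → ∀ v : Euc n, gauge K (r • v) = r * gauge K v := by
    intro r hr v
    rw [gauge_smul_of_nonneg hr, smul_eq_mul]
  have hγcont : Continuous (gauge K) := continuous_gauge hKconv hKnhds
  obtain ⟨R, hR⟩ := hKcpt.isBounded.subset_ball 0
  have hRpos : 0 < R := by
    have h0K : (0 : Euc n) ∈ K := interior_subset hK0
    have := hR h0K
    simpa using this
  have hγpos : ∀ v : Euc n, v ≠ 0 → 0 < gauge K v := by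
    intro v hv
    have h1 : gauge (Metric.ball (0:Euc n) R) v ≤ gauge K v := gauge_mono habs hR v
    rw [gauge_ball hRpos.le] at h1
    have h2 : 0 < ‖v‖ / R := div_pos (norm_pos_iff.2 hv) hRpos
    linarith
  have hFcpt : IsCompact (frontier U) :=
    Metric.isCompact_of_isClosed_isBounded isClosed_frontier
      (hUbdd.closure.subset frontier_subset_closure)
  have hbdd : ∀ v : Euc n, BddBelow ((fun w => gauge K (v - w) + φ w) '' frontier U) := by
    intro v
    exact (hFcpt.image ((hγcont.comp (continuous_const.sub continuous_id)).add hφcont)).bddBelow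
  have hle : ∀ v : Euc n, ∀ w ∈ frontier U, rho K U φ v ≤ gauge K (v - w) + φ w := by
    intro v w hw
    exact csInf_le (hbdd v) ⟨w, hw, rfl⟩
  intro t ht0 ht1
  set z := x + t • (y - x) with hzdef
  have hxy : x ≠ y := by
    rintro rfl
    rw [hUopen.frontier_eq] at hy
    exact hy.2 hx
  have hxy0 : x - y ≠ 0 := sub_ne_zero.2 hxy
  have hγ0 : 0 < gauge K (x - y) := hγpos _ hxy0
  have hxz : x - z = t • (x - y) := by rw [hzdef]; module
  have hzy : z - y = (1 - t) • (x - y) := by rw [hzdef]; module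
  have hgxz : gauge K (x - z) = t * gauge K (x - y) := by rw [hxz, hsm t ht0.le]
  have hgzy : gauge K (z - y) = (1 - t) * gauge K (x - y) := by
    rw [hzy, hsm _ (by linarith)]
  have hdecomp : gauge K (x - y) = gauge K (x - z) + gauge K (z - y) := by
    rw [hgxz, hgzy]; ring
  have key : ∀ w ∈ frontier U, gauge K (z - y) + φ y ≤ gauge K (z - w) + φ w := by
    intro w hw
    have h1 : gauge K (x - y) + φ y ≤ gauge K (x - w) + φ w := hclosest ▸ hle x w hw
    have h2 : gauge K (x - w) ≤ gauge K (x - z) + gauge K (z - w) := by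
      have e : x - w = (x - z) + (z - w) := by abel
      rw [e]; exact htri _ _
    linarith
  have ha : rho K U φ z = gauge K (z - y) + φ y := by
    refine le_antisymm (hle z y hy) ?_
    refine le_csInf ⟨_, ⟨y, hy, rfl⟩⟩ ?_
    rintro b ⟨w, hw, rfl⟩
    exact key w hw
  refine ⟨ha, ?_⟩
  intro y' hy' heq'
  have e0 : gauge K (z - y') + φ y' = gauge K (z - y) + φ y := by rw [← heq', ha]
  have h1 : gauge K (x - y) + φ y ≤ gauge K (x - y') + φ y' := hclosest ▸ hle x y' hy'
  have h2 : gauge K (x - y') ≤ gauge K (x - z) + gauge K (z - y') := by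
    have e : x - y' = (x - z) + (z - y') := by abel
    rw [e]; exact htri _ _
  have eqA : gauge K (x - y') = gauge K (x - z) + gauge K (z - y') := by linarith
  have eqB : gauge K (x - y') + φ y' = gauge K (x - y) + φ y := by linarith
  have hxz0 : x - z ≠ 0 := by rw [hxz]; exact smul_ne_zero ht0.ne' hxy0
  obtain ⟨c, hc, hcase⟩ :
      ∃ c : ℝ, 0 ≤ c ∧ ((x - z) = c • (z - y') ∨ (z - y') = c • (x - z)) := by
    by_contra h
    have hlt := hKstrict (x - z) (z - y') h
    rw [show (x - z) + (z - y') = x - y' by abel] at hlt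
    linarith
  obtain ⟨d, hd, hzy'⟩ : ∃ d : ℝ, 0 ≤ d ∧ z - y' = d • (x - y) := by
    rcases hcase with h | h
    · have hc0 : c ≠ 0 := by
        rintro rfl
        rw [zero_smul] at h
        exact hxz0 h
      refine ⟨c⁻¹ * t, by positivity, ?_⟩
      have e : z - y' = c⁻¹ • (x - z) := by rw [h, inv_smul_smul₀ hc0]
      rw [e, hxz, smul_smul]
    · exact ⟨c * t, mul_nonneg hc ht0.le, by rw [h, hxz, smul_smul]⟩
  set s := t + d with hsdef
  have hs0 : 0 < s := by positivity
  have hy'eq : x - y' = s • (x - y) := by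
    calc x - y' = (x - z) + (z - y') := by abel
    _ = s • (x - y) := by rw [hxz, hzy', hsdef, add_smul]
  have hgy' : gauge K (x - y') = s * gauge K (x - y) := by rw [hy'eq, hsm _ hs0.le]
  have hy'y : y' - y = (1 - s) • (x - y) := by
    calc y' - y = (x - y) - (x - y') := by abel
    _ = (x - y) - s • (x - y) := by rw [hy'eq]
    _ = (1 - s) • (x - y) := by rw [sub_smul, one_smul]
  rcases lt_trichotomy s 1 with hs | hs | hs
  · exfalso
    have hne : y' ≠ y := by
      intro h
      rw [h, sub_self] at hy'y
      rcases smul_eq_zero.1 hy'y.symm with h1 | h1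
      · linarith
      · exact hxy0 h1
    have hlip := (hφlip y' y hne).2
    rw [hy'y, hsm _ (by linarith)] at hlip
    have e : (1 - s) * gauge K (x - y) = gauge K (x - y) - s * gauge K (x - y) := by ring
    linarith
  · have : y' - y = 0 := by rw [hy'y, hs, sub_self, zero_smul]
    exact sub_eq_zero.1 this
  · exfalso
    have hyy' : y - y' = (s - 1) • (x - y) := by
      calc y - y' = (x - y') - (x - y) := by abel
      _ = s • (x - y) - (x - y) := by rw [hy'eq]
      _ = (s - 1) • (x - y) := by rw [sub_smul, one_smul]
    have hne : y ≠ y' := by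
      intro h
      rw [← h, sub_self] at hyy'
      rcases smul_eq_zero.1 hyy'.symm with h1 | h1
      · linarith
      · exact hxy0 h1
    have hlip := (hφlip y y' hne).2
    rw [hyy', hsm _ (by linarith)] at hlip
    have e : (s - 1) * gauge K (x - y) = s * gauge K (x - y) - gauge K (x - y) := by ring
    linarith
end
end

section
/- Let C ⊆ ℝⁿ be a compact convex set with 0 in its interior and let γ_C be its gauge. Let p ∈ ℝⁿ with γ_C(p) < 1, let ν ∈ ℝⁿ, and let λ > 0 be such that μ := p + λν satisfies γ_C(μ) = 1. If γ_C is differentiable at μ, then ⟨∇γ_C(μ), ν⟩ > 0. -/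
open Set

noncomputable section

/-- if `γ_C(p) < 1`, `λ > 0`, `μ = p + λν` satisfies `γ_C(μ) = 1`, and
`γ_C` is differentiable at `μ`, then `⟨∇γ_C(μ), ν⟩ > 0`. -/
theorem gauge_gradient_inner_pos {n : ℕ}
    (C : Set (Euc n)) (hCcpt : IsCompact C) (hCconv : Convex ℝ C)
    (hC0 : (0 : Euc n) ∈ interior C)
    (p ν : Euc n) (l : ℝ) (hl : 0 < l)
    (hp : gauge C p < 1) (hμ : gauge C (p + l • ν) = 1)
    (hdiff : DifferentiableAt ℝ (gauge C) (p + l • ν)) :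
    0 < rinner (gradient (gauge C) (p + l • ν)) ν := by
  set μ := p + l • ν with hμdef
  have habs : Absorbent ℝ C := absorbent_nhds_zero (mem_interior_iff_mem_nhds.mp hC0)
  -- gauge is convex on univ
  have hconv : ConvexOn ℝ (univ : Set (Euc n)) (gauge C) := by
    refine ⟨convex_univ, fun x _ y _ a b ha hb hab => ?_⟩
    calc gauge C (a • x + b • y) ≤ gauge C (a • x) + gauge C (b • y) :=
          gauge_add_le hCconv habs _ _
      _ = a * gauge C x + b * gauge C y := by
          rw [gauge_smul_of_nonneg ha, gauge_smul_of_nonneg hb, smul_eq_mul, smul_eq_mul]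
  -- the 1-D function
  set w := l • ν with hw
  have hline : ∀ t : ℝ, p + t • w = (AffineMap.lineMap p (p + w) : ℝ →ᵃ[ℝ] Euc n) t := by
    intro t
    simp [AffineMap.lineMap_apply, add_comm]
  have hg : ConvexOn ℝ (univ : Set ℝ) (fun t : ℝ => gauge C (p + t • w)) := by
    have := hconv.comp_affineMap (AffineMap.lineMap p (p + w) : ℝ →ᵃ[ℝ] Euc n)
    refine ⟨convex_univ, fun x hx y hy a b ha hb hab => ?_⟩
    have h2 := this.2 (show x ∈ _ from by simp) (show y ∈ _ from by simp) ha hb hab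
    simpa only [Function.comp, ← hline] using h2
  -- derivative of g at 1
  have hfd : HasFDerivAt (gauge C) (fderiv ℝ (gauge C) μ) μ := hdiff.hasFDerivAt
  have hcurve : HasDerivAt (fun t : ℝ => p + t • w) w 1 := by
    simpa using ((hasDerivAt_id (1:ℝ)).smul_const w).const_add p
  have hgd : HasDerivAt (fun t : ℝ => gauge C (p + t • w)) (fderiv ℝ (gauge C) μ w) 1 := by
    have heq : p + (1:ℝ) • w = μ := by rw [hμdef, one_smul]
    have hfd' : HasFDerivAt (gauge C) (fderiv ℝ (gauge C) μ) (p + (1:ℝ) • w) := heq ▸ hfd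
    exact hfd'.comp_hasDerivAt 1 hcurve
  have hslope := hg.slope_le_of_hasDerivAt (mem_univ (0:ℝ)) (mem_univ (1:ℝ)) one_pos hgd
  have h0 : (fun t : ℝ => gauge C (p + t • w)) 0 = gauge C p := by simp
  have h1 : (fun t : ℝ => gauge C (p + t • w)) 1 = 1 := by simpa [hw] using hμ
  have hsl : slope (fun t : ℝ => gauge C (p + t • w)) 0 1 = 1 - gauge C p := by
    rw [slope_def_field]
    simp only at h0 h1
    rw [h0, h1]
    ring
  rw [hsl] at hslope
  have hpos : 0 < fderiv ℝ (gauge C) μ w := lt_of_lt_of_le (by linarith) hslope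
  have hgrad : rinner (gradient (gauge C) μ) w = fderiv ℝ (gauge C) μ w := by
    simp [rinner, gradient, InnerProductSpace.toDual_symm_apply]
  have : rinner (gradient (gauge C) μ) w = l * rinner (gradient (gauge C) μ) ν := by
    simp [rinner, hw, inner_smul_right]
  nlinarith [hgrad, this, hpos]
end
end

section
/- Let K ⊆ ℝⁿ be a compact convex set with 0 in its interior, γ its gauge and K° its polar, let U ⊆ ℝⁿ be a bounded open set with nonempty boundary, and let φ : ℝⁿ → ℝ be continuous and satisfy the Lipschitz property −γ(y − x) ≤ φ(x) − φ(y) ≤ γ(x − y) for all x, y. If ρ is differentiable at a point x ∈ ℝⁿ, then ∇ρ(x) ∈ K°; equivalently, γ_{K°}(∇ρ(x)) ≤ 1. -/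
open Set Filter Topology MeasureTheory
open scoped NNReal

noncomputable section

/-- `ρ` is Lipschitz with respect to the gauge. -/
lemma rho_lipschitz_aux {n : ℕ}
    (K : Set (Euc n)) (hKconv : Convex ℝ K) (hK0 : (0 : Euc n) ∈ interior K)
    (U : Set (Euc n)) (hUbdd : Bornology.IsBounded U)
    (hUfr : (frontier U).Nonempty)
    (φ : Euc n → ℝ) (hφcont : Continuous φ)
    (a b : Euc n) :
    rho K U φ a ≤ gauge K (a - b) + rho K U φ b := by
  have habs : Absorbent ℝ K := absorbent_nhds_zero (mem_interior_iff_mem_nhds.mp hK0)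
  have hfr_cpt : IsCompact (frontier U) :=
    Metric.isCompact_of_isClosed_isBounded isClosed_frontier
      (hUbdd.closure.subset frontier_subset_closure)
  obtain ⟨m, hm⟩ : ∃ m, ∀ y ∈ frontier U, m ≤ φ y := by
    obtain ⟨m, hm⟩ := (hfr_cpt.bddBelow_image hφcont.continuousOn)
    exact ⟨m, fun y hy => hm ⟨y, hy, rfl⟩⟩
  have hbdd : ∀ c : Euc n, BddBelow ((fun y => gauge K (c - y) + φ y) '' frontier U) := by
    intro c
    refine ⟨m, ?_⟩
    rintro z ⟨y, hy, rfl⟩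
    show m ≤ gauge K (c - y) + φ y
    have := gauge_nonneg (s := K) (c - y)
    linarith [hm y hy]
  rw [rho, rho, ← sub_le_iff_le_add']
  refine le_csInf (hUfr.image _) ?_
  rintro z ⟨y, hy, rfl⟩
  rw [sub_le_iff_le_add']
  have h1 : gauge K (a - y) ≤ gauge K (a - b) + gauge K (b - y) := by
    have := gauge_add_le hKconv habs (a - b) (b - y)
    simpa [sub_add_sub_cancel] using this
  calc sInf ((fun y => gauge K (a - y) + φ y) '' frontier U)
      ≤ gauge K (a - y) + φ y := csInf_le (hbdd a) ⟨y, hy, rfl⟩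
    _ ≤ gauge K (a - b) + (gauge K (b - y) + φ y) := by linarith

/-- wherever `ρ` is differentiable, its gradient lies in the polar `K°`;
equivalently the polar gauge of the gradient is at most `1`. -/
theorem gradient_rho_mem_polar {n : ℕ}
    (K : Set (Euc n)) (hKcpt : IsCompact K) (hKconv : Convex ℝ K)
    (hK0 : (0 : Euc n) ∈ interior K)
    (U : Set (Euc n)) (hUopen : IsOpen U) (hUbdd : Bornology.IsBounded U)
    (hUfr : (frontier U).Nonempty)
    (φ : Euc n → ℝ) (hφcont : Continuous φ)
    (hφlip : ∀ x y : Euc n,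
      -gauge K (y - x) ≤ φ x - φ y ∧ φ x - φ y ≤ gauge K (x - y))
    (x : Euc n) (hdiff : DifferentiableAt ℝ (rho K U φ) x) :
    gradient (rho K U φ) x ∈ polarSet K ∧
      gauge (polarSet K) (gradient (rho K U φ) x) ≤ 1 := by
  set L := fderiv ℝ (rho K U φ) x with hL
  -- directional derivative bound
  have key : ∀ v : Euc n, L v ≤ gauge K v := by
    intro v
    have hline : HasDerivAt (fun t : ℝ => x + t • v) v 0 := by
      simpa using ((hasDerivAt_id (0 : ℝ)).smul_const v).const_add x
    have hdiff' : HasFDerivAt (rho K U φ) L (x + (0:ℝ) • v) := by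
      simpa using hdiff.hasFDerivAt
    have hg : HasDerivAt (fun t : ℝ => rho K U φ (x + t • v)) (L v) 0 :=
      by have := HasFDerivAt.comp_hasDerivAt (0 : ℝ) hdiff' hline; exact this
    have hslope := hasDerivAt_iff_tendsto_slope.mp hg
    have hslope' : Tendsto (slope (fun t : ℝ => rho K U φ (x + t • v)) 0) (𝓝[>] 0) (𝓝 (L v)) :=
      hslope.mono_left (nhdsWithin_mono 0 (fun t ht => ne_of_gt ht))
    refine le_of_tendsto hslope' ?_
    filter_upwards [self_mem_nhdsWithin] with t (ht : 0 < t)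
    have hlip := rho_lipschitz_aux K hKconv hK0 U hUbdd hUfr φ hφcont (x + t • v) x
    have hgauge : gauge K (x + t • v - x) = t * gauge K v := by
      rw [show x + t • v - x = t • v by abel, gauge_smul_of_nonneg ht.le, smul_eq_mul]
    have hle : rho K U φ (x + t • v) - rho K U φ x ≤ gauge K v * t := by
      rw [hgauge] at hlip; linarith [mul_comm t (gauge K v) ▸ hlip]
    rw [slope_def_field, zero_smul, add_zero, sub_zero, div_le_iff₀ ht]
    exact hle
  have hinner : ∀ v : Euc n, (inner ℝ (gradient (rho K U φ) x) v : ℝ) = L v := by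
    intro v
    rw [gradient, InnerProductSpace.toDual_symm_apply]
  have hmem : gradient (rho K U φ) x ∈ polarSet K := by
    intro y hy
    rw [rinner, hinner y]
    exact (key y).trans (gauge_le_one_of_mem hy)
  exact ⟨hmem, gauge_le_one_of_mem hmem⟩
end
end

section
/- Let K ⊆ ℝⁿ be a compact convex set with 0 in its interior and let γ be its gauge. Suppose γ is twice continuously differentiable on ℝⁿ ∖ {0}. Then there exists a constant C₂ > 0 such that for every nonzero x ∈ ℝⁿ, every ξ ∈ ℝⁿ with γ(ξ) ≤ 1 and γ(−ξ) ≤ 1, and every h with 0 < h < γ(x): (γ(x + hξ) + γ(x − hξ) − 2γ(x)) / h² ≤ C₂ / (γ(x) − h). -/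
open Set

noncomputable section

set_option maxHeartbeats 1000000 in
/-- if the gauge `γ` of `K` is `C²` away from the origin, then its second
difference quotients satisfy `𝔇²_{h,ξ} γ(x) ≤ C₂ / (γ(x) − h)` uniformly. -/
theorem gauge_second_difference_bound {n : ℕ}
    (K : Set (Euc n)) (hKcpt : IsCompact K) (hKconv : Convex ℝ K)
    (hK0 : (0 : Euc n) ∈ interior K)
    (hKC2 : ContDiffOn ℝ 2 (gauge K) {(0 : Euc n)}ᶜ) :
    ∃ C₂ : ℝ, 0 < C₂ ∧ ∀ x : Euc n, x ≠ 0 →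
      ∀ ξ : Euc n, gauge K ξ ≤ 1 → gauge K (-ξ) ≤ 1 →
        ∀ h : ℝ, 0 < h → h < gauge K x →
          (gauge K (x + h • ξ) + gauge K (x - h • ξ) - 2 * gauge K x) / h ^ 2 ≤
            C₂ / (gauge K x - h) := by
  classical
  set γ := gauge K with hγdef
  have hKnhds : K ∈ nhds (0 : Euc n) := mem_interior_iff_mem_nhds.mp hK0
  have hKabs : Absorbent ℝ K := absorbent_nhds_zero hKnhds
  -- upper bound on `K` gives lower bound on the gauge
  obtain ⟨R₀, hKR₀⟩ := hKcpt.isBounded.subset_closedBall (0 : Euc n)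
  set R : ℝ := max R₀ 1 with hRdef
  have hR0 : (0 : ℝ) < R := lt_of_lt_of_le one_pos (le_max_right _ _)
  have hKR : K ⊆ Metric.closedBall 0 R :=
    hKR₀.trans (Metric.closedBall_subset_closedBall (le_max_left _ _))
  have hlow : ∀ y : Euc n, ‖y‖ / R ≤ γ y := by
    intro y
    rw [hγdef, ← gauge_closedBall hR0.le]
    exact gauge_mono hKabs hKR y
  have hpos : ∀ y : Euc n, y ≠ 0 → 0 < γ y := by
    intro y hy
    have : 0 < ‖y‖ / R := div_pos (norm_pos_iff.mpr hy) hR0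
    linarith [hlow y]
  have hnormle : ∀ y : Euc n, γ y ≤ 1 → ‖y‖ ≤ R := by
    intro y hy
    have := hlow y
    rw [div_le_iff₀ hR0] at *
    nlinarith [hlow y, norm_nonneg y]
  have hadd : ∀ a b : Euc n, γ (a + b) ≤ γ a + γ b := gauge_add_le hKconv hKabs
  have hsm : ∀ a : ℝ, 0 ≤ a → ∀ y : Euc n, γ (a • y) = a * γ y := by
    intro a ha y
    exact gauge_smul_of_nonneg ha y
  have hcont : Continuous γ := continuous_gauge hKconv hKnhds
  -- small gauge of multiples of admissible directions
  have hsmall : ∀ ξ : Euc n, γ ξ ≤ 1 → γ (-ξ) ≤ 1 → ∀ t : ℝ, γ (t • ξ) ≤ |t| := by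
    intro ξ hξ hξ' t
    rcases le_or_gt 0 t with ht | ht
    · rw [hsm t ht, abs_of_nonneg ht]
      nlinarith [gauge_nonneg (s := K) ξ]
    · have : t • ξ = (-t) • (-ξ) := by rw [neg_smul, smul_neg, neg_neg]
      rw [this, hsm (-t) (by linarith), abs_of_neg ht]
      nlinarith [gauge_nonneg (s := K) (-ξ)]
  -- differentiability data
  set U : Set (Euc n) := {(0 : Euc n)}ᶜ with hUdef
  have hU : IsOpen U := isOpen_compl_singleton
  have hmemU : ∀ y : Euc n, y ≠ 0 → y ∈ U := fun y hy => hy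
  have hdiff : ∀ y : Euc n, y ≠ 0 → HasFDerivAt γ (fderiv ℝ γ y) y := by
    intro y hy
    exact ((hKC2.differentiableOn (by norm_num)).differentiableAt
      (hU.mem_nhds (hmemU y hy))).hasFDerivAt
  set g : Euc n → (Euc n →L[ℝ] ℝ) := fderiv ℝ γ with hgdef
  have hg1 : ContDiffOn ℝ 1 g U := hKC2.fderiv_of_isOpen hU (by norm_num)
  have hgdiff : ∀ y : Euc n, y ≠ 0 → HasFDerivAt g (fderiv ℝ g y) y := by
    intro y hy
    exact ((hg1.differentiableOn one_ne_zero).differentiableAt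
      (hU.mem_nhds (hmemU y hy))).hasFDerivAt
  have hg'cont : ContinuousOn (fderiv ℝ g) U := hg1.continuousOn_fderiv_of_isOpen hU le_rfl
  -- compact annulus and bound on the second derivative there
  set A : Set (Euc n) := {y : Euc n | γ y ∈ Icc (1/2 : ℝ) 2} with hAdef
  have hAclosed : IsClosed A := IsClosed.preimage hcont isClosed_Icc
  have hAU : A ⊆ U := by
    intro y hy
    have : (1/2 : ℝ) ≤ γ y := hy.1
    intro h0
    simp only [mem_singleton_iff] at h0
    rw [h0, hγdef, gauge_zero] at this
    linarith
  have hAbdd : Bornology.IsBounded A := by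
    apply Metric.isBounded_closedBall (x := (0 : Euc n)) (r := 2 * R) |>.subset
    intro y hy
    have h1 : ‖y‖ / R ≤ 2 := le_trans (hlow y) hy.2
    rw [Metric.mem_closedBall, dist_zero_right]
    rw [div_le_iff₀ hR0] at h1
    linarith
  have hAcpt : IsCompact A := Metric.isCompact_of_isClosed_isBounded hAclosed hAbdd
  obtain ⟨M, hM⟩ := hAcpt.exists_bound_of_continuousOn (f := fderiv ℝ g) (by exact hg'cont.mono hAU)
  set M0 : ℝ := max M 0 with hM0def
  set B : ℝ := M0 * R ^ 2 + 1 with hBdef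
  have hB1 : (1 : ℝ) ≤ B := by
    have : 0 ≤ M0 * R ^ 2 := by positivity
    linarith
  set Cu : ℝ := 2 * B + 4 with hCudef
  have hCu0 : (0 : ℝ) < Cu := by nlinarith
  -- the key estimate on the unit gauge sphere
  have key : ∀ x : Euc n, γ x = 1 → ∀ ξ : Euc n, γ ξ ≤ 1 → γ (-ξ) ≤ 1 →
      ∀ h : ℝ, 0 < h → h < 1 →
        (γ (x + h • ξ) + γ (x - h • ξ) - 2 * γ x) / h ^ 2 ≤ Cu / (1 - h) := by
    intro x hx1 ξ hξ hξ' h hh0 hh1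
    have hξR : ‖ξ‖ ≤ R := hnormle ξ hξ
    have h1h : (0 : ℝ) < 1 - h := by linarith
    rcases le_or_gt h (1/2) with hh | hh
    · -- Taylor regime
      set S : Set ℝ := Icc (-h) h with hSdef
      have h0S : (0 : ℝ) ∈ S := ⟨by linarith, hh0.le⟩
      have hhS : h ∈ S := ⟨by linarith, le_rfl⟩
      have hnhS : -h ∈ S := ⟨le_rfl, by linarith⟩
      have hmemA : ∀ t ∈ S, x + t • ξ ∈ A := by
        intro t ht
        have habs : |t| ≤ h := abs_le.mpr ⟨ht.1, ht.2⟩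
        have hup : γ (x + t • ξ) ≤ 2 := by
          have hu1 := hadd x (t • ξ)
          have hu2 := hsmall ξ hξ hξ' t
          rw [hx1] at hu1
          linarith
        have hlo : (1/2 : ℝ) ≤ γ (x + t • ξ) := by
          have hxdecomp : x = (x + t • ξ) + (-(t • ξ)) := by abel
          have h2 : γ x ≤ γ (x + t • ξ) + γ (-(t • ξ)) := by
            conv_lhs => rw [hxdecomp]
            exact hadd _ _
          have h3 : γ (-(t • ξ)) ≤ |t| := by
            have : -(t • ξ) = (-t) • ξ := by rw [neg_smul]
            rw [this]
            simpa using hsmall ξ hξ hξ' (-t)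
          rw [hx1] at h2
          linarith
        exact ⟨hlo, hup⟩
      have hne : ∀ t ∈ S, x + t • ξ ≠ 0 := fun t ht => hAU (hmemA t ht)
      have hline : ∀ t : ℝ, HasDerivAt (fun t : ℝ => x + t • ξ) ξ t := by
        intro t
        simpa using ((hasDerivAt_id t).smul_const ξ).const_add x
      set φ : ℝ → ℝ := fun t => γ (x + t • ξ) with hφdef
      set ψ : ℝ → ℝ := fun t => (g (x + t • ξ)) ξ with hψdef
      have hφd : ∀ t ∈ S, HasDerivAt φ (ψ t) t := by
        intro t ht
        exact (hdiff _ (hne t ht)).comp_hasDerivAt t (hline t)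
      have hψd : ∀ t ∈ S, HasDerivAt ψ ((fderiv ℝ g (x + t • ξ)) ξ ξ) t := by
        intro t ht
        have hc : HasDerivAt (fun t : ℝ => g (x + t • ξ)) ((fderiv ℝ g (x + t • ξ)) ξ) t :=
          (hgdiff _ (hne t ht)).comp_hasDerivAt t (hline t)
        simpa using hc.clm_apply (hasDerivAt_const t ξ)
      have hψbound : ∀ t ∈ S, ‖(fderiv ℝ g (x + t • ξ)) ξ ξ‖ ≤ B := by
        intro t ht
        have h1 : ‖(fderiv ℝ g (x + t • ξ)) ξ ξ‖ ≤ ‖fderiv ℝ g (x + t • ξ)‖ * ‖ξ‖ * ‖ξ‖ := by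
          calc ‖(fderiv ℝ g (x + t • ξ)) ξ ξ‖ ≤ ‖(fderiv ℝ g (x + t • ξ)) ξ‖ * ‖ξ‖ :=
              ((fderiv ℝ g (x + t • ξ)) ξ).le_opNorm ξ
            _ ≤ ‖fderiv ℝ g (x + t • ξ)‖ * ‖ξ‖ * ‖ξ‖ := by
              gcongr
              exact (fderiv ℝ g (x + t • ξ)).le_opNorm ξ
        have h2 : ‖fderiv ℝ g (x + t • ξ)‖ ≤ M0 :=
          le_trans (hM _ (hmemA t ht)) (le_max_left _ _)
        have h3 : ‖fderiv ℝ g (x + t • ξ)‖ * ‖ξ‖ * ‖ξ‖ ≤ M0 * R ^ 2 := by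
          have hn : (0:ℝ) ≤ ‖ξ‖ := norm_nonneg _
          have hM0 : (0:ℝ) ≤ M0 := le_max_right M 0
          nlinarith [norm_nonneg (fderiv ℝ g (x + t • ξ)),
            mul_le_mul h2 (mul_self_le_mul_self hn hξR) (by positivity) hM0]
        linarith
      -- ψ is B-Lipschitz on S
      have hψlip : ∀ t ∈ S, ‖ψ t - ψ 0‖ ≤ B * h := by
        intro t ht
        have := Convex.norm_image_sub_le_of_norm_hasDerivWithin_le
          (f := ψ) (f' := fun t => (fderiv ℝ g (x + t • ξ)) ξ ξ) (s := S)
          (fun u hu => (hψd u hu).hasDerivWithinAt) hψbound (convex_Icc _ _) h0S ht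
        have habs : |t| ≤ h := abs_le.mpr ⟨ht.1, ht.2⟩
        calc ‖ψ t - ψ 0‖ ≤ B * ‖t - 0‖ := this
          _ = B * |t| := by rw [sub_zero, Real.norm_eq_abs]
          _ ≤ B * h := by nlinarith
      -- the Taylor-type bound on φ
      set F : ℝ → ℝ := fun t => φ t - t * ψ 0 with hFdef
      have hFd : ∀ t ∈ S, HasDerivWithinAt F (ψ t - ψ 0) S t := by
        intro t ht
        exact ((hφd t ht).sub (hasDerivAt_mul_const (ψ 0))).hasDerivWithinAt
      have hFbound : ∀ t ∈ S, ‖ψ t - ψ 0‖ ≤ B * h := hψlip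
      have hMVT : ∀ y ∈ S, ‖F y - F 0‖ ≤ B * h * ‖y - 0‖ := fun y hy =>
        Convex.norm_image_sub_le_of_norm_hasDerivWithin_le
          (f := F) (f' := fun t => ψ t - ψ 0) (s := S) hFd hFbound (convex_Icc _ _) h0S hy
      have e1 : ‖F h - F 0‖ ≤ B * h * h := by
        have := hMVT h hhS
        calc ‖F h - F 0‖ ≤ B * h * ‖h - 0‖ := this
          _ = B * h * h := by rw [sub_zero, Real.norm_eq_abs, abs_of_pos hh0]
      have e2 : ‖F (-h) - F 0‖ ≤ B * h * h := by
        have := hMVT (-h) hnhS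
        calc ‖F (-h) - F 0‖ ≤ B * h * ‖-h - 0‖ := this
          _ = B * h * h := by
            rw [sub_zero, Real.norm_eq_abs, abs_neg, abs_of_pos hh0]
      have hφ0 : φ 0 = 1 := by
        simp only [hφdef, zero_smul, add_zero]
        exact hx1
      have eF1 : F h - F 0 = φ h - φ 0 - h * ψ 0 := by simp [hFdef]; ring
      have eF2 : F (-h) - F 0 = φ (-h) - φ 0 + h * ψ 0 := by simp [hFdef]; ring
      have habs1 : φ h - φ 0 - h * ψ 0 ≤ B * h * h := by
        have h5 : |φ h - φ 0 - h * ψ 0| ≤ B * h * h := by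
          rw [← eF1, ← Real.norm_eq_abs]; exact e1
        exact (abs_le.mp h5).2
      have habs2 : φ (-h) - φ 0 + h * ψ 0 ≤ B * h * h := by
        have h5 : |φ (-h) - φ 0 + h * ψ 0| ≤ B * h * h := by
          rw [← eF2, ← Real.norm_eq_abs]; exact e2
        exact (abs_le.mp h5).2
      have hsum : φ h + φ (-h) - 2 * φ 0 ≤ 2 * B * h ^ 2 := by nlinarith
      have hφh : φ h = γ (x + h • ξ) := rfl
      have hφnh : φ (-h) = γ (x - h • ξ) := by
        simp only [hφdef, neg_smul, ← sub_eq_add_neg]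
      have hnum : γ (x + h • ξ) + γ (x - h • ξ) - 2 * γ x ≤ 2 * B * h ^ 2 := by
        rw [hx1, ← hφnh]
        rw [hφ0] at hsum
        exact hsum
      have hh2 : (0:ℝ) < h ^ 2 := by positivity
      rw [div_le_div_iff₀ hh2 h1h]
      have hB0 : (0:ℝ) ≤ B := by linarith
      have ht1 : 0 ≤ (2*B*h^2 - (γ (x + h • ξ) + γ (x - h • ξ) - 2 * γ x)) * (1 - h) :=
        mul_nonneg (by linarith) h1h.le
      have ht2 : (0:ℝ) ≤ 2*B*h^3 := by positivity
      nlinarith [ht1, ht2, sq_nonneg h]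
    · -- large h: crude subadditivity bound
      have h1 : γ (x + h • ξ) ≤ 1 + h := by
        have := hadd x (h • ξ)
        have h2 : γ (h • ξ) ≤ h := by
          have := hsmall ξ hξ hξ' h
          rwa [abs_of_pos hh0] at this
        rw [hx1] at this
        linarith
      have h2 : γ (x - h • ξ) ≤ 1 + h := by
        have hd : x - h • ξ = x + (-h) • ξ := by rw [neg_smul, ← sub_eq_add_neg]
        rw [hd]
        have := hadd x ((-h) • ξ)
        have h3 : γ ((-h) • ξ) ≤ h := by
          have := hsmall ξ hξ hξ' (-h)
          rwa [abs_neg, abs_of_pos hh0] at this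
        rw [hx1] at this
        linarith
      have hh2 : (0:ℝ) < h ^ 2 := by positivity
      rw [div_le_div_iff₀ hh2 h1h]
      rw [hx1]
      nlinarith
  -- rescale to the general case
  refine ⟨Cu, hCu0, ?_⟩
  intro x hx ξ hξ hξ' h hh0 hhx
  set s : ℝ := γ x with hsdef
  have hs0 : 0 < s := hpos x hx
  have hs0' : s ≠ 0 := hs0.ne'
  set x' : Euc n := s⁻¹ • x with hx'def
  have hx'1 : γ x' = 1 := by
    rw [hx'def, hsm s⁻¹ (by positivity) x, ← hsdef, inv_mul_cancel₀ hs0']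
  set h' : ℝ := h / s with hh'def
  have hh'0 : 0 < h' := div_pos hh0 hs0
  have hh'1 : h' < 1 := (div_lt_one hs0).mpr hhx
  have hkey := key x' hx'1 ξ hξ hξ' h' hh'0 hh'1
  have hsh : s * h' = h := by rw [hh'def, mul_div_cancel₀ _ hs0']
  have e1 : x + h • ξ = s • (x' + h' • ξ) := by
    rw [hx'def, hh'def, smul_add, smul_inv_smul₀ hs0', smul_smul, mul_div_cancel₀ _ hs0']
  have e2 : x - h • ξ = s • (x' - h' • ξ) := by
    rw [hx'def, hh'def, smul_sub, smul_inv_smul₀ hs0', smul_smul, mul_div_cancel₀ _ hs0']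
  have g1 : γ (x + h • ξ) = s * γ (x' + h' • ξ) := by rw [e1, hsm s hs0.le]
  have g2 : γ (x - h • ξ) = s * γ (x' - h' • ξ) := by rw [e2, hsm s hs0.le]
  have hq : (γ (x + h • ξ) + γ (x - h • ξ) - 2 * γ x) / h ^ 2
      = ((γ (x' + h' • ξ) + γ (x' - h' • ξ) - 2 * γ x') / h' ^ 2) / s := by
    rw [g1, g2, hx'1, ← hsdef, ← hsh]
    field_simp
  have hr : Cu / (1 - h') / s = Cu / (s - h) := by
    rw [div_div, ← hsh]
    congr 1
    ring
  rw [hq, ← hr]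
  exact (div_le_div_iff_of_pos_right hs0).mpr hkey
end
end

section
/- Let K ⊆ ℝⁿ be a compact convex set with 0 in its interior and let γ be its gauge. Suppose there exist constants C₀ > 0 and C₂ > 0 such that C₀|x| ≤ γ(x) for all x, and for every nonzero x, every ξ with γ(ξ) ≤ 1 and γ(−ξ) ≤ 1, and every 0 < h < γ(x): (γ(x + hξ) + γ(x − hξ) − 2γ(x)) / h² ≤ C₂ / (γ(x) − h). Let U ⊆ ℝⁿ be a bounded open set with nonempty boundary, let φ : ℝⁿ → ℝ be continuous, and let d(x) denote the Euclidean distance from x to ∂U. Then for every x ∈ U, every ξ with γ(ξ) ≤ 1 and γ(−ξ) ≤ 1, and every h with 0 < h < C₀ d(x): (ρ(x + hξ) + ρ(x − hξ) − 2ρ(x)) / h² ≤ C₂ / (C₀ d(x) − h). -/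
open Set Filter Topology MeasureTheory
open scoped NNReal

noncomputable section

/-- the second difference quotient bound for the gauge `γ` transfers to
the obstacle `ρ`: for `x ∈ U`, `γ(±ξ) ≤ 1` and `0 < h < C₀ d(x)` one has
`𝔇²_{h,ξ} ρ(x) ≤ C₂ / (C₀ d(x) − h)`, where `d` is the Euclidean distance to `∂U`. -/
theorem rho_second_difference_bound {n : ℕ}
    (K : Set (Euc n)) (hKcpt : IsCompact K) (hKconv : Convex ℝ K)
    (hK0 : (0 : Euc n) ∈ interior K)
    (C₀ : ℝ) (hC₀ : 0 < C₀) (hlow : ∀ x : Euc n, C₀ * ‖x‖ ≤ gauge K x)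
    (C₂ : ℝ) (hC₂ : 0 < C₂)
    (hgauge2 : ∀ x : Euc n, x ≠ 0 →
      ∀ ξ : Euc n, gauge K ξ ≤ 1 → gauge K (-ξ) ≤ 1 →
        ∀ h : ℝ, 0 < h → h < gauge K x →
          (gauge K (x + h • ξ) + gauge K (x - h • ξ) - 2 * gauge K x) / h ^ 2 ≤
            C₂ / (gauge K x - h))
    (U : Set (Euc n)) (hUopen : IsOpen U) (hUbdd : Bornology.IsBounded U)
    (hUfr : (frontier U).Nonempty)
    (φ : Euc n → ℝ) (hφcont : Continuous φ) :
    ∀ x ∈ U, ∀ ξ : Euc n, gauge K ξ ≤ 1 → gauge K (-ξ) ≤ 1 →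
      ∀ h : ℝ, 0 < h → h < C₀ * Metric.infDist x (frontier U) →
        (rho K U φ (x + h • ξ) + rho K U φ (x - h • ξ) - 2 * rho K U φ x) / h ^ 2 ≤
          C₂ / (C₀ * Metric.infDist x (frontier U) - h) := by
  intro x hx ξ hξ hξ' h hh hhlt
  set d := Metric.infDist x (frontier U) with hd
  have hfrb : Bornology.IsBounded (frontier U) :=
    (hUbdd.closure).subset frontier_subset_closure
  have hcf : IsCompact (frontier U) :=
    Metric.isCompact_of_isClosed_isBounded isClosed_frontier hfrb
  have hgc : Continuous (gauge K) :=
    continuous_gauge hKconv (mem_interior_iff_mem_nhds.mp hK0)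
  -- lower bound for φ on the frontier
  obtain ⟨yφ, hyφ, hmφ⟩ := hcf.exists_isMinOn hUfr hφcont.continuousOn
  have hbdd : ∀ z : Euc n, BddBelow ((fun y => gauge K (z - y) + φ y) '' frontier U) := by
    intro z
    refine ⟨φ yφ, ?_⟩
    rintro b ⟨y, hy, rfl⟩
    have h1 : φ yφ ≤ φ y := hmφ hy
    have h2 := gauge_nonneg (s := K) (z - y)
    dsimp only
    linarith
  -- minimizer for rho at x
  obtain ⟨y₀, hy₀, hmin⟩ := hcf.exists_isMinOn hUfr
    (Continuous.continuousOn (by continuity :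
      Continuous fun y => gauge K (x - y) + φ y))
  have hne : ∀ z : Euc n, ((fun y => gauge K (z - y) + φ y) '' frontier U).Nonempty :=
    fun z => hUfr.image _
  have hrx : rho K U φ x = gauge K (x - y₀) + φ y₀ := by
    refine le_antisymm (csInf_le (hbdd x) ⟨y₀, hy₀, rfl⟩) (le_csInf (hne x) ?_)
    rintro b ⟨y, hy, rfl⟩
    exact hmin hy
  have hrp : rho K U φ (x + h • ξ) ≤ gauge K ((x - y₀) + h • ξ) + φ y₀ := by
    have : (x + h • ξ) - y₀ = (x - y₀) + h • ξ := by abel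
    simpa [rho, this] using csInf_le (hbdd (x + h • ξ)) ⟨y₀, hy₀, rfl⟩
  have hrm : rho K U φ (x - h • ξ) ≤ gauge K ((x - y₀) - h • ξ) + φ y₀ := by
    have : (x - h • ξ) - y₀ = (x - y₀) - h • ξ := by abel
    simpa [rho, this] using csInf_le (hbdd (x - h • ξ)) ⟨y₀, hy₀, rfl⟩
  -- geometric facts
  have hxU : x ∉ frontier U := fun hxf =>
    (hxf.2) (by simpa [hUopen.interior_eq] using hx)
  have hxy : x - y₀ ≠ 0 := sub_ne_zero.mpr (fun hxe => hxU (hxe ▸ hy₀))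
  have hdist : d ≤ ‖x - y₀‖ := by
    simpa [dist_eq_norm] using Metric.infDist_le_dist_of_mem hy₀
  have hdpos : 0 < d := by
    nlinarith [hlow (x - y₀)]
  have hγlb : C₀ * d ≤ gauge K (x - y₀) := by
    have := hlow (x - y₀)
    nlinarith
  have hhγ : h < gauge K (x - y₀) := lt_of_lt_of_le hhlt hγlb
  have hkey := hgauge2 (x - y₀) hxy ξ hξ hξ' h hh hhγ
  have hnum : rho K U φ (x + h • ξ) + rho K U φ (x - h • ξ) - 2 * rho K U φ x ≤
      gauge K ((x - y₀) + h • ξ) + gauge K ((x - y₀) - h • ξ) - 2 * gauge K (x - y₀) := by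
    rw [hrx]; linarith
  have hpos1 : (0:ℝ) < C₀ * d - h := by linarith
  have hpos2 : (0:ℝ) < gauge K (x - y₀) - h := by linarith
  calc (rho K U φ (x + h • ξ) + rho K U φ (x - h • ξ) - 2 * rho K U φ x) / h ^ 2
      ≤ (gauge K ((x - y₀) + h • ξ) + gauge K ((x - y₀) - h • ξ) - 2 * gauge K (x - y₀)) / h ^ 2 := by
        gcongr
    _ ≤ C₂ / (gauge K (x - y₀) - h) := hkey
    _ ≤ C₂ / (C₀ * d - h) := by
        apply div_le_div_of_nonneg_left hC₂.le hpos1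
        linarith
end
end
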